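/- arXiv:1504.01577 — 8 statements merged into one kernel-verified Lean document; each statement's English description precedes it below -/
import Mathlib

section
/- Let (P_n)_{n≥1}, (Q_n)_{n≥1}, (R_n)_{n≥1} be sequences of real polynomials such that (n-scalability) there exist fixed polynomials P, Q ∈ ℝ[X] with P_n = (n/(n+1))·P and Q_n = ((n−1)/(n+1))·Q for all n ≥ 1, and (θ*-stationarity) 1 − P_n − Q_n = X·R_n holds as an identity in ℝ[X] for all n ≥ 1. Then there exist polynomials Ā, B̄ ∈ ℝ[X] such that for all n ≥ 1: P_n = (2n/(n+1))·(1 − ((Ā + B̄)/2)·X), Q_n = −((n−1)/(n+1))·(1 − B̄·X), and R_n = (n·Ā + B̄)/(n+1). -/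
open Polynomial

/-- Theorem 1 of the paper: under n-scalability and θ*-stationarity, the polynomial
coefficients of a second-order iterative algorithm have the stated form. -/
theorem stmt_0 (P Q R : ℕ → Polynomial ℝ)
    (hscal : ∃ Pb Qb : Polynomial ℝ, ∀ n : ℕ, 1 ≤ n →
      P n = ((n : ℝ) / ((n : ℝ) + 1)) • Pb ∧
      Q n = (((n : ℝ) - 1) / ((n : ℝ) + 1)) • Qb)
    (hstat : ∀ n : ℕ, 1 ≤ n → (1 : Polynomial ℝ) - P n - Q n = Polynomial.X * R n) :
    ∃ Abar Bbar : Polynomial ℝ, ∀ n : ℕ, 1 ≤ n →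
      P n = (2 * (n : ℝ) / ((n : ℝ) + 1)) •
        ((1 : Polynomial ℝ) - ((1 : ℝ) / 2) • ((Abar + Bbar) * Polynomial.X)) ∧
      Q n = -((((n : ℝ) - 1) / ((n : ℝ) + 1)) •
        ((1 : Polynomial ℝ) - Bbar * Polynomial.X)) ∧
      R n = (((n : ℝ) + 1)⁻¹) • ((n : ℝ) • Abar + Bbar) := by
  obtain ⟨Pb, Qb, h⟩ := hscal
  have h1 := h 1 le_rfl
  have h2 := h 2 one_le_two
  have s1 := hstat 1 le_rfl
  have s2 := hstat 2 one_le_two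
  rw [h1.1, h1.2] at s1
  rw [h2.1, h2.2] at s2
  norm_num at s1 s2
  -- s1 : 1 - (1/2) • Pb = X * R 1  (hopefully)
  have hPb : Pb = (2:ℝ) • (1:Polynomial ℝ) - (2:ℝ) • (X * R 1) := by
    linear_combination (norm := module) (-2:ℝ) • s1
  have hQb : Qb = (-1:ℝ) • (1:Polynomial ℝ) + ((4:ℝ) • (X * R 1) - (3:ℝ) • (X * R 2)) := by
    linear_combination (norm := module) (-3:ℝ) • s2 - (2:ℝ) • hPb
  refine ⟨(3:ℝ) • R 2 - (2:ℝ) • R 1, (4:ℝ) • R 1 - (3:ℝ) • R 2, fun n hn => ?_⟩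
  have hn1 : ((n:ℝ) + 1) ≠ 0 := by positivity
  have key : X * R n = X * ((((n:ℝ) + 1)⁻¹) •
      ((n:ℝ) • ((3:ℝ) • R 2 - (2:ℝ) • R 1) + ((4:ℝ) • R 1 - (3:ℝ) • R 2))) := by
    rw [← hstat n hn, (h n hn).1, (h n hn).2, hPb, hQb]
    simp only [smul_sub, smul_add, smul_smul, add_mul, sub_mul, smul_mul_assoc,
      mul_smul_comm, mul_add, mul_sub, mul_one, one_mul, mul_comm X (R 1), mul_comm X (R 2)]
    match_scalars <;> field_simp <;> ring
  refine ⟨?_, ?_, ?_⟩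
  · rw [(h n hn).1, hPb]
    simp only [smul_sub, smul_add, smul_smul, add_mul, sub_mul, smul_mul_assoc,
      mul_smul_comm, mul_add, mul_sub, mul_one, one_mul, mul_comm X (R 1), mul_comm X (R 2)]
    match_scalars <;> field_simp <;> ring
  · rw [(h n hn).2, hQb]
    simp only [smul_sub, smul_add, smul_smul, add_mul, sub_mul, smul_mul_assoc,
      mul_smul_comm, mul_add, mul_sub, mul_one, one_mul, mul_comm X (R 1), mul_comm X (R 2),
      neg_smul, smul_neg, neg_sub, neg_add, neg_neg, one_smul]
    match_scalars <;> field_simp <;> ring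
  · exact mul_left_cancel₀ Polynomial.X_ne_zero key
end

section
/- Let d ≥ 1, let g : ℝ^d → ℝ^d be any map, let γ ∈ ℝ and ψ_1 ∈ ℝ^d. Define ψ_{n+1} = ψ_n − γ g(ψ_n) for n ≥ 1, and define the averages θ_n = (1/n) ∑_{i=1}^n ψ_i for n ≥ 1, with the convention θ_0 = ψ_1. Then for all n ≥ 1: θ_{n+1} = (2n/(n+1)) θ_n − ((n−1)/(n+1)) θ_{n−1} − (γ/(n+1)) g(n θ_n − (n−1) θ_{n−1}). In other words, averaged gradient descent coincides with the second-order recursion (6) with parameters α = 0 and β = γ. -/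
/-- Averaged gradient descent coincides with the second-order recursion (6)
with parameters α = 0 and β = γ. -/
theorem stmt_1 (d : ℕ) (hd : 1 ≤ d) (g : (Fin d → ℝ) → (Fin d → ℝ)) (γ : ℝ)
    (ψ θ : ℕ → Fin d → ℝ)
    (hψ : ∀ n : ℕ, 1 ≤ n → ψ (n + 1) = ψ n - γ • g (ψ n))
    (hθ0 : θ 0 = ψ 1)
    (hθ : ∀ n : ℕ, 1 ≤ n → θ n = ((n : ℝ))⁻¹ • ∑ i ∈ Finset.Icc 1 n, ψ i) :
    ∀ n : ℕ, 1 ≤ n →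
      θ (n + 1) = (2 * (n : ℝ) / ((n : ℝ) + 1)) • θ n
        - (((n : ℝ) - 1) / ((n : ℝ) + 1)) • θ (n - 1)
        - (γ / ((n : ℝ) + 1)) • g ((n : ℝ) • θ n - ((n : ℝ) - 1) • θ (n - 1)) := by
  have key : ∀ n : ℕ, 1 ≤ n → (n : ℝ) • θ n = ∑ i ∈ Finset.Icc 1 n, ψ i := by
    intro n hn
    have hn0 : (n : ℝ) ≠ 0 := by positivity
    rw [hθ n hn, smul_smul, mul_inv_cancel₀ hn0, one_smul]
  have psi_eq : ∀ n : ℕ, 1 ≤ n →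
      (n : ℝ) • θ n - ((n : ℝ) - 1) • θ (n - 1) = ψ n := by
    intro n hn
    match n, hn with
    | 1, _ =>
      have h1 := key 1 le_rfl
      simp only [Nat.cast_one, one_smul, Finset.Icc_self, Finset.sum_singleton] at h1
      simp [h1]
    | (m + 2), _ =>
      have h1 := key (m + 2) (by omega)
      have h2 := key (m + 1) (by omega)
      have hs : ∑ i ∈ Finset.Icc 1 (m + 2), ψ i =
          (∑ i ∈ Finset.Icc 1 (m + 1), ψ i) + ψ (m + 2) :=
        Finset.sum_Icc_succ_top (by omega) ψ
      have : ((m : ℝ) + 2) • θ (m + 2) - ((m : ℝ) + 1) • θ (m + 1) = ψ (m + 2) := by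
        push_cast at h1 h2
        rw [h1, h2, hs]; abel
      push_cast
      have e : ((m:ℝ) + 2 - 1) = (m:ℝ) + 1 := by ring
      rw [e]; exact this
  intro n hn
  have hn1 : (1 : ℕ) ≤ n + 1 := by omega
  have hS := key (n + 1) hn1
  have hs : ∑ i ∈ Finset.Icc 1 (n + 1), ψ i =
      (∑ i ∈ Finset.Icc 1 n, ψ i) + ψ (n + 1) := Finset.sum_Icc_succ_top (by omega) ψ
  have hkn := key n hn
  have hpsi := psi_eq n hn
  have hθn1 : θ (n + 1) = (((n : ℝ) + 1))⁻¹ • ∑ i ∈ Finset.Icc 1 (n + 1), ψ i := by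
    have := hθ (n + 1) hn1; push_cast at this; exact this
  rw [hθn1, hs, hψ n hn, ← hkn, ← hpsi]
  have hne : (n : ℝ) + 1 ≠ 0 := by positivity
  match_scalars <;> field_simp <;> ring
end

section
/- Let H be a d×d real matrix, q ∈ ℝ^d, θ* ∈ ℝ^d with H θ* = q, and let f'(θ) = Hθ − q. Let α, β ∈ ℝ satisfy nα + β ≠ 0 for all n ≥ 1. Let (θ_n)_{n≥0} be any sequence in ℝ^d with θ_1 = θ_0 and set η_n = n(θ_n − θ*). Then (θ_n) satisfies, for all n ≥ 1, θ_{n+1} = (2n/(n+1)) θ_n − ((n−1)/(n+1)) θ_{n−1} − ((nα+β)/(n+1)) f'((n(α+β)/(nα+β)) θ_n − ((n−1)β/(nα+β)) θ_{n−1}) if and only if (η_n) satisfies, for all n ≥ 1, η_{n+1} = (I − αH) η_n + (I − βH)(η_n − η_{n−1}). -/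
/-- The second-order gradient recursion (6) on θ is equivalent to the constant-coefficient
recursion η_{n+1} = (I - αH)η_n + (I - βH)(η_n - η_{n-1}) on η_n = n(θ_n - θ*). -/
theorem stmt_3 (d : ℕ) (hd : 1 ≤ d) (H : Matrix (Fin d) (Fin d) ℝ)
    (q θstar : Fin d → ℝ) (hθstar : H.mulVec θstar = q)
    (α β : ℝ) (hαβ : ∀ n : ℕ, 1 ≤ n → (n : ℝ) * α + β ≠ 0)
    (θ : ℕ → Fin d → ℝ) (hθ1 : θ 1 = θ 0)
    (η : ℕ → Fin d → ℝ) (hη : ∀ n, η n = (n : ℝ) • (θ n - θstar)) :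
    (∀ n : ℕ, 1 ≤ n →
      θ (n + 1) = (2 * (n : ℝ) / ((n : ℝ) + 1)) • θ n
        - (((n : ℝ) - 1) / ((n : ℝ) + 1)) • θ (n - 1)
        - ((((n : ℝ) * α + β) / ((n : ℝ) + 1)) •
            (H.mulVec (((n : ℝ) * (α + β) / ((n : ℝ) * α + β)) • θ n
              - (((n : ℝ) - 1) * β / ((n : ℝ) * α + β)) • θ (n - 1)) - q)))
    ↔
    (∀ n : ℕ, 1 ≤ n →
      η (n + 1) = (η n - α • H.mulVec (η n))
        + ((η n - η (n - 1)) - β • H.mulVec (η n - η (n - 1)))) := by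
  subst hθstar
  refine forall_congr' fun n => imp_congr_right fun hn => ?_
  have hN1 : ((n : ℝ) + 1) ≠ 0 := by positivity
  have hD : ((n : ℝ) * α + β) ≠ 0 := hαβ n hn
  simp only [hη, Nat.cast_add, Nat.cast_one, Nat.cast_sub hn]
  constructor
  · intro h
    rw [h]
    simp only [Matrix.mulVec_sub, Matrix.mulVec_smul, Matrix.mulVec_add]
    match_scalars <;> field_simp <;> ring
  · intro h
    have h2 : θ (n + 1) = θstar + ((n : ℝ) + 1)⁻¹ • (((n : ℝ) + 1) • (θ (n + 1) - θstar)) := by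
      rw [smul_smul, inv_mul_cancel₀ hN1, one_smul]
      module
    rw [h] at h2
    rw [h2]
    simp only [Matrix.mulVec_sub, Matrix.mulVec_smul, Matrix.mulVec_add]
    match_scalars <;> field_simp <;> ring
end

section
/- Fix real numbers α, β, h with h > 0, 0 < α ≤ 1/h and 0 ≤ β ≤ 2/h − α. Let c ∈ ℝ and let (η_n)_{n≥0} satisfy η_0 = 0, η_1 = c, η_{n+1} = (1 − αh)η_n + (1 − βh)(η_n − η_{n−1}) for n ≥ 1. Then for all n ≥ 1, η_n² ≤ 2c²/(αh). -/
/-- First bound of Theorem 2: for 0 < α ≤ 1/h and 0 ≤ β ≤ 2/h - α,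
η_n² ≤ 2c²/(αh). -/
theorem stmt_9 (α β h c : ℝ) (hh : 0 < h) (hα0 : 0 < α) (hα : α ≤ 1 / h)
    (hβ0 : 0 ≤ β) (hβ : β ≤ 2 / h - α)
    (η : ℕ → ℝ) (hη0 : η 0 = 0) (hη1 : η 1 = c)
    (hrec : ∀ n : ℕ, 1 ≤ n →
      η (n + 1) = (1 - α * h) * η n + (1 - β * h) * (η n - η (n - 1))) :
    ∀ n : ℕ, 1 ≤ n → (η n) ^ 2 ≤ 2 * c ^ 2 / (α * h) := by
  set a := α * h with ha_def
  set b := β * h with hb_def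
  have ha0 : 0 < a := mul_pos hα0 hh
  have ha1 : a ≤ 1 := by
    have h1 : α * h ≤ (1 / h) * h := mul_le_mul_of_nonneg_right hα hh.le
    have h2 : (1 / h) * h = 1 := by field_simp
    rw [ha_def]; linarith
  have hb0' : 0 ≤ b := mul_nonneg hβ0 hh.le
  have hb2 : b ≤ 2 - a := by
    have h1 : β * h ≤ (2 / h - α) * h := mul_le_mul_of_nonneg_right hβ hh.le
    have h2 : (2 / h - α) * h = 2 - α * h := by field_simp
    rw [hb_def, ha_def]; linarith
  have hv : 0 < 2 - b := by linarith
  have hbb : b * b ≤ (2 - a) * (2 - a) := mul_self_le_mul_self hb0' hb2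
  have hkey : 0 ≤ (2 - a) * (2 - b) ^ 2 - 2 * (2 - a - b) ^ 2 := by
    nlinarith [mul_nonneg ha0.le (show (0:ℝ) ≤ 4 - 2 * a - b ^ 2 by nlinarith [hbb])]
  have key : ∀ n : ℕ, 1 ≤ n →
      (2 - b) * (η n) ^ 2 + (2 - b) * (1 - b) ^ 2 * (η (n - 1)) ^ 2
        - 2 * (2 - a - b) * (1 - b) * (η n) * (η (n - 1)) ≤ (2 - b) * c ^ 2 := by
    intro n hn
    induction n, hn using Nat.le_induction with
    | base =>
      simp only [show (1:ℕ) - 1 = 0 from rfl, hη0, hη1]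
      nlinarith [sq_nonneg c]
    | succ n hn ih =>
      have hrw : η (n + 1) = (1 - a) * η n + (1 - b) * (η n - η (n - 1)) :=
        hrec n hn
      have hidx : (n + 1) - 1 = n := rfl
      rw [hidx, hrw]
      have hnn : 0 ≤ a * b * (4 - a - 2 * b) * (η n) ^ 2 := by
        have : (0:ℝ) ≤ 4 - a - 2 * b := by linarith
        positivity
      nlinarith [ih, hnn]
  intro n hn
  have hEn := key n hn
  have hmain : (2 - b) ^ 2 * (a * (η n) ^ 2) ≤ (2 - b) ^ 2 * (2 * c ^ 2) := by
    nlinarith [mul_le_mul_of_nonneg_left hEn (by linarith : (0:ℝ) ≤ 2 * (2 - b)),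
      mul_nonneg hkey (sq_nonneg (η n)),
      sq_nonneg ((2 - a - b) * η n - (2 - b) * (1 - b) * η (n - 1))]
  have h2 : a * (η n) ^ 2 ≤ 2 * c ^ 2 :=
    le_of_mul_le_mul_left hmain (by positivity)
  rw [le_div_iff₀ ha0]
  linarith
end

section
/- Fix real numbers α, β, h with h > 0, 0 ≤ α ≤ 1/h, 0 ≤ β ≤ 2/h − α, and α + β > 0. Let c ∈ ℝ and let (η_n)_{n≥0} satisfy η_0 = 0, η_1 = c, η_{n+1} = (1 − αh)η_n + (1 − βh)(η_n − η_{n−1}) for n ≥ 1. Then for all n ≥ 1, η_n² ≤ 8c²n/((α+β)h). -/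
/-- Second bound of Theorem 2: for 0 ≤ α ≤ 1/h, 0 ≤ β ≤ 2/h - α and α + β > 0,
η_n² ≤ 8c²n/((α+β)h). -/
theorem stmt_10 (α β h c : ℝ) (hh : 0 < h) (hα0 : 0 ≤ α) (hα : α ≤ 1 / h)
    (hβ0 : 0 ≤ β) (hβ : β ≤ 2 / h - α) (hαβ : 0 < α + β)
    (η : ℕ → ℝ) (hη0 : η 0 = 0) (hη1 : η 1 = c)
    (hrec : ∀ n : ℕ, 1 ≤ n →
      η (n + 1) = (1 - α * h) * η n + (1 - β * h) * (η n - η (n - 1))) :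
    ∀ n : ℕ, 1 ≤ n → (η n) ^ 2 ≤ 8 * c ^ 2 * (n : ℝ) / ((α + β) * h) := by
  have hah : α * h ≤ 1 := (le_div_iff₀ hh).mp hα
  have hbh : β * h ≤ 2 - α * h := by
    have := mul_le_mul_of_nonneg_right hβ hh.le
    have h2 : (2 / h - α) * h = 2 - α * h := by field_simp
    linarith [h2 ▸ this]
  have hah0 : 0 ≤ α * h := mul_nonneg hα0 hh.le
  have hbh0 : 0 ≤ β * h := mul_nonneg hβ0 hh.le
  set E : ℕ → ℝ := fun n =>
    (η (n+1))^2 - (2 - (α+β)*h) * (η (n+1)) * (η n) + (1 - β*h) * (η n)^2 with hE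
  have hE0 : E 0 = c^2 := by simp [hE, hη0, hη1]
  have hEstep : ∀ n : ℕ, E (n+1) = (1 - β*h) * E n := by
    intro n
    have hr := hrec (n+1) (by omega)
    simp only [Nat.add_sub_cancel] at hr
    simp only [hE]
    rw [hr]; ring
  have habs : |1 - β*h| ≤ 1 := by
    rw [abs_le]; constructor <;> nlinarith
  have hEbound : ∀ n : ℕ, |E n| ≤ c^2 := by
    intro n
    induction n with
    | zero => simp [hE0, abs_of_nonneg (sq_nonneg c)]
    | succ k ih =>
        rw [hEstep k, abs_mul]
        calc |1 - β*h| * |E k| ≤ 1 * (c^2) :=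
              mul_le_mul habs ih (abs_nonneg _) zero_le_one
          _ = c^2 := one_mul _
  have hpt : ∀ k : ℕ,
      (β*h/2) * ((η (k+1))^2 - (η k)^2) + (α*h/2) * (η (k+1))^2 ≤ E k := by
    intro k
    simp only [hE]
    nlinarith [sq_nonneg (η (k+1) - η k), sq_nonneg (η k), sq_nonneg (η (k+1))]
  intro n hn
  -- sum of E over range n
  have hsum_ub : ∑ k ∈ Finset.range n, E k ≤ (n : ℝ) * c^2 := by
    calc ∑ k ∈ Finset.range n, E k ≤ ∑ k ∈ Finset.range n, |E k| :=
          Finset.sum_le_sum fun k _ => le_abs_self _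
      _ ≤ ∑ k ∈ Finset.range n, c^2 := Finset.sum_le_sum fun k _ => hEbound k
      _ = (n : ℝ) * c^2 := by simp [mul_comm]
  have hsum_lb : (β*h/2) * (η n)^2 + (α*h/2) * (η n)^2 ≤ ∑ k ∈ Finset.range n, E k := by
    have h1 : ∑ k ∈ Finset.range n,
        ((β*h/2) * ((η (k+1))^2 - (η k)^2) + (α*h/2) * (η (k+1))^2)
        ≤ ∑ k ∈ Finset.range n, E k := Finset.sum_le_sum fun k _ => hpt k
    have h2 : ∑ k ∈ Finset.range n,
        ((β*h/2) * ((η (k+1))^2 - (η k)^2) + (α*h/2) * (η (k+1))^2)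
        = (β*h/2) * (η n)^2 + (α*h/2) * ∑ k ∈ Finset.range n, (η (k+1))^2 := by
      rw [Finset.sum_add_distrib, ← Finset.mul_sum, ← Finset.mul_sum,
        Finset.sum_range_sub (fun k => (η k)^2), hη0]
      ring_nf
    have h3 : (η n)^2 ≤ ∑ k ∈ Finset.range n, (η (k+1))^2 := by
      have hmem : n - 1 ∈ Finset.range n := Finset.mem_range.mpr (by omega)
      have := Finset.single_le_sum (f := fun k => (η (k+1))^2)
        (fun k _ => sq_nonneg _) hmem
      have heq : n - 1 + 1 = n := by omega
      simpa [heq] using this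
    have h4 : (α*h/2) * (η n)^2 ≤ (α*h/2) * ∑ k ∈ Finset.range n, (η (k+1))^2 :=
      mul_le_mul_of_nonneg_left h3 (by linarith)
    linarith [h2 ▸ h1]
  have hkey : ((α+β)*h/2) * (η n)^2 ≤ (n : ℝ) * c^2 := by
    have : (β*h/2) * (η n)^2 + (α*h/2) * (η n)^2 = ((α+β)*h/2) * (η n)^2 := by ring
    linarith [this ▸ hsum_lb]
  have hμ : 0 < (α+β)*h := mul_pos hαβ hh
  rw [le_div_iff₀ hμ]
  have hn1 : (1 : ℝ) ≤ (n : ℝ) := by exact_mod_cast hn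
  nlinarith [sq_nonneg c, sq_nonneg (η n)]
end

section
/- Fix real numbers α, β, h with h > 0, 0 ≤ α ≤ 1/h, 0 ≤ β ≤ 2/h − α, and α + β > 0. Let c ∈ ℝ and let (η_n)_{n≥0} satisfy η_0 = 0, η_1 = c, η_{n+1} = (1 − αh)η_n + (1 − βh)(η_n − η_{n−1}) for n ≥ 1. Then for all n ≥ 1, η_n² ≤ 16c²/((α+β)²h²). -/
lemma aux_npow (ρ : ℝ) (h0 : 0 ≤ ρ) (h1 : ρ ≤ 1) (n : ℕ) :
    (n : ℝ) * ρ ^ (n - 1) * (1 - ρ) ≤ 1 := by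
  have h1' : (n : ℝ) * ρ ^ (n - 1) ≤ ∑ k ∈ Finset.range n, ρ ^ k := by
    calc (n : ℝ) * ρ ^ (n - 1) = ∑ _k ∈ Finset.range n, ρ ^ (n - 1) := by
          rw [Finset.sum_const, Finset.card_range, nsmul_eq_mul]
      _ ≤ ∑ k ∈ Finset.range n, ρ ^ k := by
          refine Finset.sum_le_sum fun k hk => ?_
          exact pow_le_pow_of_le_one h0 h1 (by
            have := Finset.mem_range.mp hk; omega)
  have h2 : (∑ k ∈ Finset.range n, ρ ^ k) * (1 - ρ) = 1 - ρ ^ n := by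
    have := geom_sum_mul ρ n
    nlinarith [this]
  have hpn : 0 ≤ ρ ^ n := pow_nonneg h0 n
  nlinarith [h1']

lemma aux_form (l m : ℂ) (c : ℝ) (η : ℕ → ℝ) (hη0 : η 0 = 0)
    (hstep : ∀ n : ℕ, (η (n + 1) : ℂ) = m * η n + c * l ^ n) :
    ∀ n : ℕ, (η n : ℂ) = c * ∑ k ∈ Finset.range n, l ^ k * m ^ (n - 1 - k) := by
  intro n
  induction n with
  | zero => simp [hη0]
  | succ n ih =>
    rw [hstep n, ih, Finset.sum_range_succ]
    have hterm : ∀ k ∈ Finset.range n,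
        l ^ k * m ^ (n + 1 - 1 - k) = m * (l ^ k * m ^ (n - 1 - k)) := by
      intro k hk
      have hk' := Finset.mem_range.mp hk
      have : n + 1 - 1 - k = (n - 1 - k) + 1 := by omega
      rw [this, pow_succ]; ring
    rw [Finset.sum_congr rfl hterm, ← Finset.mul_sum]
    simp only [Nat.add_sub_cancel, Nat.sub_self, pow_zero]
    ring

lemma aux_main (p b c : ℝ) (η : ℕ → ℝ) (hη0 : η 0 = 0) (hη1 : η 1 = c)
    (hrec : ∀ n : ℕ, 1 ≤ n → η (n + 1) = p * η n - b * η (n - 1))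
    (l m : ℂ) (hadd : l + m = (p : ℂ)) (hmul : l * m = (b : ℂ))
    (hl : ‖l‖ ≤ 1) (hm : ‖m‖ ≤ 1) :
    (∀ n : ℕ, |η n| * ‖l - m‖ ≤ 2 * |c|) ∧
    (∀ n : ℕ, |η n| * (1 - max (‖l‖) (‖m‖)) ≤ |c|) := by
  have hstep : ∀ n : ℕ, (η (n + 1) : ℂ) = m * η n + c * l ^ n := by
    intro n
    induction n with
    | zero => rw [hη1, hη0]; simp
    | succ n ih =>
      have hr := hrec (n + 1) (by omega)
      simp only [Nat.add_sub_cancel] at hr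
      have hC : (η (n + 1 + 1) : ℂ) = (p : ℂ) * η (n + 1) - (b : ℂ) * η n := by
        exact_mod_cast hr
      rw [hC, ih]
      linear_combination (-(m * (η n : ℂ) + (c : ℂ) * l ^ n)) * hadd + ((η n : ℂ)) * hmul
  have hform := aux_form l m c η hη0 hstep
  set ρ := max (‖l‖) (‖m‖) with hρ_def
  have hρ0 : 0 ≤ ρ := le_trans (norm_nonneg l) (le_max_left _ _)
  have hρ1 : ρ ≤ 1 := max_le hl hm
  have habs_eq : ∀ n : ℕ, |η n| = ‖(η n : ℂ)‖ := fun n =>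
    by rw [Complex.norm_real, Real.norm_eq_abs]
  have boundA : ∀ n : ℕ, |η n| ≤ |c| * (n * ρ ^ (n - 1)) := by
    intro n
    rw [habs_eq, hform n, norm_mul, Complex.norm_real, Real.norm_eq_abs]
    gcongr
    calc ‖∑ k ∈ Finset.range n, l ^ k * m ^ (n - 1 - k)‖
        ≤ ∑ k ∈ Finset.range n, ‖l ^ k * m ^ (n - 1 - k)‖ := by
          exact norm_sum_le _ _
      _ ≤ ∑ k ∈ Finset.range n, ρ ^ (n - 1) := by
          refine Finset.sum_le_sum fun k hk => ?_
          have hk' := Finset.mem_range.mp hk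
          rw [norm_mul, norm_pow, norm_pow]
          have h1 : ‖l‖ ^ k ≤ ρ ^ k :=
            pow_le_pow_left₀ (norm_nonneg l) (le_max_left _ _) k
          have h2 : ‖m‖ ^ (n - 1 - k) ≤ ρ ^ (n - 1 - k) :=
            pow_le_pow_left₀ (norm_nonneg m) (le_max_right _ _) _
          calc ‖l‖ ^ k * ‖m‖ ^ (n - 1 - k)
              ≤ ρ ^ k * ρ ^ (n - 1 - k) := by
                exact mul_le_mul h1 h2 (pow_nonneg (norm_nonneg m) _)
                  (pow_nonneg hρ0 k)
            _ = ρ ^ (n - 1) := by rw [← pow_add]; congr 1; omega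
      _ = n * ρ ^ (n - 1) := by
          rw [Finset.sum_const, Finset.card_range, nsmul_eq_mul]
  constructor
  · intro n
    have key : (η n : ℂ) * (l - m) = (c : ℂ) * (l ^ n - m ^ n) := by
      rw [hform n, mul_assoc, geom_sum₂_mul]
    have habs : |η n| * ‖l - m‖ = |c| * ‖l ^ n - m ^ n‖ := by
      rw [habs_eq, ← norm_mul, key, norm_mul, Complex.norm_real, Real.norm_eq_abs]
    rw [habs]
    have h1 : ‖l ^ n - m ^ n‖ ≤ 2 := by
      calc ‖l ^ n - m ^ n‖ ≤ ‖l ^ n‖ + ‖m ^ n‖ := by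
            have := norm_add_le (l ^ n) (-(m ^ n))
            simpa [sub_eq_add_neg] using this
        _ ≤ 1 + 1 := by
            rw [norm_pow, norm_pow]
            exact add_le_add (pow_le_one₀ (norm_nonneg l) hl)
              (pow_le_one₀ (norm_nonneg m) hm)
        _ = 2 := by norm_num
    calc |c| * ‖l ^ n - m ^ n‖ ≤ |c| * 2 :=
          mul_le_mul_of_nonneg_left h1 (abs_nonneg c)
      _ = 2 * |c| := by ring
  · intro n
    have hA := boundA n
    have hnp := aux_npow ρ hρ0 hρ1 n
    have h1ρ : 0 ≤ 1 - ρ := by linarith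
    calc |η n| * (1 - ρ) ≤ (|c| * (n * ρ ^ (n - 1))) * (1 - ρ) := by
          gcongr
      _ = |c| * ((n : ℝ) * ρ ^ (n - 1) * (1 - ρ)) := by ring
      _ ≤ |c| * 1 := mul_le_mul_of_nonneg_left hnp (abs_nonneg c)
      _ = |c| := by ring

/-- Third bound of Theorem 2: for 0 ≤ α ≤ 1/h, 0 ≤ β ≤ 2/h - α and α + β > 0,
η_n² ≤ 16c²/((α+β)²h²). -/
theorem stmt_11 (α β h c : ℝ) (hh : 0 < h) (hα0 : 0 ≤ α) (hα : α ≤ 1 / h)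
    (hβ0 : 0 ≤ β) (hβ : β ≤ 2 / h - α) (hαβ : 0 < α + β)
    (η : ℕ → ℝ) (hη0 : η 0 = 0) (hη1 : η 1 = c)
    (hrec : ∀ n : ℕ, 1 ≤ n →
      η (n + 1) = (1 - α * h) * η n + (1 - β * h) * (η n - η (n - 1))) :
    ∀ n : ℕ, 1 ≤ n → (η n) ^ 2 ≤ 16 * c ^ 2 / ((α + β) ^ 2 * h ^ 2) := by
  have hαh1 : α * h ≤ 1 := by
    have := (le_div_iff₀ hh).mp hα; linarith
  have hs2 : (α + β) * h ≤ 2 := by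
    have h1 : α + β ≤ 2 / h := by linarith
    have := (le_div_iff₀ hh).mp h1; linarith
  set s := (α + β) * h with hs_def
  have hs0 : 0 < s := mul_pos hαβ hh
  have hαh0 : 0 ≤ α * h := mul_nonneg hα0 hh.le
  have hβh0 : 0 ≤ β * h := mul_nonneg hβ0 hh.le
  have hsab : s = α * h + β * h := by rw [hs_def]; ring
  set p := 2 - s with hp_def
  set b := 1 - β * h with hb_def
  have hrec' : ∀ n : ℕ, 1 ≤ n → η (n + 1) = p * η n - b * η (n - 1) := by
    intro n hn; rw [hrec n hn, hp_def, hb_def, hs_def]; ring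
  set D := p ^ 2 - 4 * b with hD_def
  have hDs : D = s ^ 2 - 4 * (α * h) := by rw [hD_def, hp_def, hb_def, hsab]; ring
  have hp0 : 0 ≤ p := by rw [hp_def]; linarith
  have hple : p ≤ 2 := by rw [hp_def]; linarith
  clear_value s p b D
  suffices hfin : ∀ n : ℕ, |η n| * s ≤ 4 * |c| by
    intro n _
    have h1 := hfin n
    have hs2' : (0:ℝ) < (α + β) ^ 2 * h ^ 2 := by positivity
    rw [le_div_iff₀ hs2']
    have h3 : (|η n| * s) * (|η n| * s) ≤ (4 * |c|) * (4 * |c|) :=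
      mul_le_mul h1 h1 (mul_nonneg (abs_nonneg _) hs0.le) (by positivity)
    calc (η n) ^ 2 * ((α + β) ^ 2 * h ^ 2) = (|η n| * s) * (|η n| * s) := by
          rw [hs_def, ← sq_abs (η n)]; ring
      _ ≤ (4 * |c|) * (4 * |c|) := h3
      _ = 16 * c ^ 2 := by rw [← sq_abs c]; ring
  rcases le_or_gt 0 D with hD | hD
  · -- real roots case
    set r := Real.sqrt D with hr_def
    have hr0 : 0 ≤ r := Real.sqrt_nonneg D
    have hr2 : r ^ 2 = D := Real.sq_sqrt hD
    clear_value r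
    have hrs : r ≤ s := by
      rw [hr_def]
      calc Real.sqrt D ≤ Real.sqrt (s ^ 2) := Real.sqrt_le_sqrt (by nlinarith [hDs])
        _ = s := Real.sqrt_sq hs0.le
    set l : ℂ := (((p + r) / 2 : ℝ) : ℂ) with hl_def
    set m : ℂ := (((p - r) / 2 : ℝ) : ℂ) with hm_def
    clear_value l m
    have hadd : l + m = (p : ℂ) := by rw [hl_def, hm_def]; push_cast; ring
    have hre : (p + r) / 2 * ((p - r) / 2) = b := by
      linear_combination (-1/4 : ℝ) * hr2 - (1/4 : ℝ) * hD_def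
    have hmul : l * m = (b : ℂ) := by
      calc l * m = (((p + r) / 2 * ((p - r) / 2) : ℝ) : ℂ) := by
            rw [hl_def, hm_def]; push_cast; ring
        _ = (b : ℂ) := by rw [hre]
    have habsl : ‖l‖ = (p + r) / 2 := by
      rw [hl_def, Complex.norm_real, Real.norm_eq_abs, abs_of_nonneg (by positivity)]
    have habsm : ‖m‖ = |p - r| / 2 := by
      rw [hm_def, Complex.norm_real, Real.norm_eq_abs, abs_div, abs_two]
    have hpr2 : |p - r| ≤ 2 := abs_le.mpr ⟨by linarith, by linarith⟩
    have hl1 : ‖l‖ ≤ 1 := by rw [habsl]; linarith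
    have hm1 : ‖m‖ ≤ 1 := by rw [habsm]; linarith
    obtain ⟨hB, hA⟩ := aux_main p b c η hη0 hη1 hrec' l m hadd hmul hl1 hm1
    have hsub : ‖l - m‖ = r := by
      have hlm : l - m = ((r : ℝ) : ℂ) := by rw [hl_def, hm_def]; push_cast; ring
      rw [hlm, Complex.norm_real, Real.norm_eq_abs, abs_of_nonneg hr0]
    intro n
    rcases le_or_gt (s / 2) r with hcase | hcase
    · have hBn := hB n
      rw [hsub] at hBn
      have h4 : |η n| * s ≤ |η n| * (2 * r) :=
        mul_le_mul_of_nonneg_left (by linarith) (abs_nonneg _)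
      have h5 : |η n| * (2 * r) = 2 * (|η n| * r) := by ring
      linarith
    · have hAn := hA n
      have hρle : max (‖l‖) (‖m‖) ≤ 1 - s / 4 := by
        rw [habsl, habsm]
        apply max_le
        · rw [hp_def]; linarith
        · have h1 : |p - r| ≤ 2 - s / 2 :=
            abs_le.mpr ⟨by rw [hp_def]; linarith, by rw [hp_def]; linarith⟩
          linarith
      have h4 : |η n| * s ≤ |η n| * (4 * (1 - max (‖l‖) (‖m‖))) :=
        mul_le_mul_of_nonneg_left (by linarith) (abs_nonneg _)
      have h5 : |η n| * (4 * (1 - max (‖l‖) (‖m‖)))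
          = 4 * (|η n| * (1 - max (‖l‖) (‖m‖))) := by ring
      linarith
  · -- complex roots case
    have hb0 : 0 < b := by nlinarith [sq_nonneg p]
    have hb1 : b ≤ 1 := by rw [hb_def]; linarith
    set r := Real.sqrt (-D) with hr_def
    have hr0 : 0 ≤ r := Real.sqrt_nonneg _
    have hr2 : r ^ 2 = -D := Real.sq_sqrt (by linarith)
    clear_value r
    set l : ℂ := ((p / 2 : ℝ) : ℂ) + ((r / 2 : ℝ) : ℂ) * Complex.I with hl_def
    set m : ℂ := ((p / 2 : ℝ) : ℂ) + ((-(r / 2) : ℝ) : ℂ) * Complex.I with hm_def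
    clear_value l m
    have hadd : l + m = (p : ℂ) := by rw [hl_def, hm_def]; push_cast; ring
    have hre : p / 2 * (p / 2) + r / 2 * (r / 2) = b := by
      linear_combination (1/4 : ℝ) * hr2 - (1/4 : ℝ) * hD_def
    have hmul : l * m = (b : ℂ) := by
      calc l * m = ((p / 2 * (p / 2) + r / 2 * (r / 2) : ℝ) : ℂ) := by
            rw [hl_def, hm_def]; push_cast
            linear_combination (-((r : ℂ) / 2) ^ 2) * Complex.I_sq
        _ = (b : ℂ) := by rw [hre]
    have habsl : ‖l‖ = Real.sqrt b := by
      have h2 : ‖l‖ ^ 2 = b := by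
        rw [Complex.sq_norm, hl_def, Complex.normSq_add_mul_I]
        linear_combination (1/4 : ℝ) * hr2 - (1/4 : ℝ) * hD_def
      rw [← h2, Real.sqrt_sq (norm_nonneg l)]
    have habsm : ‖m‖ = Real.sqrt b := by
      have h2 : ‖m‖ ^ 2 = b := by
        rw [Complex.sq_norm, hm_def, Complex.normSq_add_mul_I]
        linear_combination (1/4 : ℝ) * hr2 - (1/4 : ℝ) * hD_def
      rw [← h2, Real.sqrt_sq (norm_nonneg m)]
    have hl1 : ‖l‖ ≤ 1 := by rw [habsl]; exact Real.sqrt_le_one.mpr hb1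
    have hm1 : ‖m‖ ≤ 1 := by rw [habsm]; exact Real.sqrt_le_one.mpr hb1
    obtain ⟨hB, hA⟩ := aux_main p b c η hη0 hη1 hrec' l m hadd hmul hl1 hm1
    have hsub : ‖l - m‖ = r := by
      have hlm : l - m = ((r : ℝ) : ℂ) * Complex.I := by rw [hl_def, hm_def]; push_cast; ring
      rw [hlm, norm_mul, Complex.norm_I, Complex.norm_real, Real.norm_eq_abs, abs_of_nonneg hr0, mul_one]
    intro n
    rcases le_or_gt (s / 2) r with hcase | hcase
    · have hBn := hB n
      rw [hsub] at hBn
      have h4 : |η n| * s ≤ |η n| * (2 * r) :=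
        mul_le_mul_of_nonneg_left (by linarith) (abs_nonneg _)
      have h5 : |η n| * (2 * r) = 2 * (|η n| * r) := by ring
      linarith
    · have hAn := hA n
      have hmD : -D < s ^ 2 / 4 := by
        have h6 : r * r < (s / 2) * (s / 2) := mul_self_lt_mul_self hr0 hcase
        have h7 : r * r = r ^ 2 := by ring
        have h8 : (s / 2) * (s / 2) = s ^ 2 / 4 := by ring
        linarith only [h6, h7, h8, hr2]
      have hss : 0 ≤ s * (2 - s) := mul_nonneg hs0.le (by linarith)
      have hDp : D = s ^ 2 - 4 * s + 4 - 4 * b := by rw [hD_def, hp_def]; ring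
      have he1 : s * (2 - s) = 2 * s - s ^ 2 := by ring
      have he2 : (1 - s / 4) ^ 2 = 1 - s / 2 + s ^ 2 / 16 := by ring
      have hble : b ≤ (1 - s / 4) ^ 2 := by linarith only [hmD, hDp, hss, he1, he2]
      have hρle : max (‖l‖) (‖m‖) ≤ 1 - s / 4 := by
        rw [habsl, habsm, max_self]
        calc Real.sqrt b ≤ Real.sqrt ((1 - s / 4) ^ 2) := Real.sqrt_le_sqrt hble
          _ = 1 - s / 4 := Real.sqrt_sq (by linarith)
      have h4 : |η n| * s ≤ |η n| * (4 * (1 - max (‖l‖) (‖m‖))) :=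
        mul_le_mul_of_nonneg_left (by linarith) (abs_nonneg _)
      have h5 : |η n| * (4 * (1 - max (‖l‖) (‖m‖)))
          = 4 * (|η n| * (1 - max (‖l‖) (‖m‖))) := by ring
      linarith
end

section
/- Let d ≥ 1, let H be a d×d real symmetric positive-definite matrix, let L > 0 satisfy ⟨v, Hv⟩ ≤ L‖v‖² for all v ∈ ℝ^d, let q ∈ ℝ^d, f(θ) = ½⟨θ, Hθ⟩ − ⟨q, θ⟩, and θ* = H⁻¹q its unique minimizer. Let α, β ∈ ℝ with 0 < α ≤ 1/L and 0 ≤ β ≤ 2/L − α, and let (θ_n)_{n≥0} be defined by θ_1 = θ_0 and, with η_n = n(θ_n − θ*), by η_{n+1} = (I − αH)η_n + (I − βH)(η_n − η_{n−1}) for n ≥ 1. Then for all n ≥ 1: f(θ_n) − f(θ*) ≤ min{ ‖θ_0 − θ*‖²/(α n²), 4‖θ_0 − θ*‖²/((α+β) n) }. -/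
open Matrix

set_option maxHeartbeats 1000000



private def gseq (r1 r2 : ℝ) : ℕ → ℝ
  | 0 => 0
  | n + 1 => r1 * gseq r1 r2 n + r2 ^ n

private lemma gseq_succ (r1 r2 : ℝ) (n : ℕ) :
    gseq r1 r2 (n + 1) = r1 * gseq r1 r2 n + r2 ^ n := rfl

private lemma gseq_succ' (r1 r2 : ℝ) (n : ℕ) :
    gseq r1 r2 (n + 1) = r2 * gseq r1 r2 n + r1 ^ n := by
  induction n with
  | zero => simp [gseq]
  | succ n ih =>
    have hdef : gseq r1 r2 (n + 1) = r1 * gseq r1 r2 n + r2 ^ n := rfl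
    have hdef2 : gseq r1 r2 (n + 2) = r1 * gseq r1 r2 (n + 1) + r2 ^ (n + 1) := rfl
    rw [hdef2]
    linear_combination r1 * ih - r2 * hdef

private lemma gseq_rec (r1 r2 : ℝ) (n : ℕ) :
    gseq r1 r2 (n + 2) = (r1 + r2) * gseq r1 r2 (n + 1) - (r1 * r2) * gseq r1 r2 n := by
  have h1 : gseq r1 r2 (n + 2) = r1 * gseq r1 r2 (n + 1) + r2 ^ (n + 1) := rfl
  have h2 : gseq r1 r2 (n + 1) = r1 * gseq r1 r2 n + r2 ^ n := rfl
  rw [h1]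
  linear_combination (-r2) * h2

/-- n * t^(n-1) * (1-t) ≤ 1 for t ∈ [0,1] -/
private lemma geo_aux {t : ℝ} (ht0 : 0 ≤ t) (ht1 : t ≤ 1) (n : ℕ) :
    (n : ℝ) * t ^ (n - 1) * (1 - t) ≤ 1 := by
  rcases Nat.eq_zero_or_pos n with h | h
  · simp [h]
  have h1 : (n : ℝ) * t ^ (n - 1) ≤ ∑ k ∈ Finset.range n, t ^ k := by
    calc (n : ℝ) * t ^ (n - 1) = ∑ _k ∈ Finset.range n, t ^ (n - 1) := by
          rw [Finset.sum_const, Finset.card_range, nsmul_eq_mul]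
      _ ≤ ∑ k ∈ Finset.range n, t ^ k := by
          apply Finset.sum_le_sum
          intro k hk
          have := Finset.mem_range.mp hk
          exact pow_le_pow_of_le_one ht0 ht1 (by omega)
  have h2 : (1 - t) * ∑ k ∈ Finset.range n, t ^ k = 1 - t ^ n := by
    have := geom_sum_mul t n
    linear_combination -this
  nlinarith [pow_nonneg ht0 n, Finset.sum_nonneg fun k (_ : k ∈ Finset.range n) => pow_nonneg ht0 k]


private lemma keyA {x y t : ℝ} (hx0 : 0 < x) (hx1 : x ≤ 1) (hy0 : 0 ≤ y)
    (ht0 : 0 ≤ t) (ht2 : t ^ 2 = 1 - y) (hc : 2 * x * (1 + y) < (x + y) ^ 2) :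
    x ≤ 2 * (1 - t) ^ 2 := by
  have hyx : x * (2 - x) < y ^ 2 := by nlinarith
  have hy0' : 0 < y := by nlinarith
  have hy1 : y ≤ 1 := by nlinarith [sq_nonneg t]
  have hsq2x : Real.sqrt (2 * x) ^ 2 = 2 * x := Real.sq_sqrt (by linarith)
  have hsq2x0 : 0 ≤ Real.sqrt (2 * x) := Real.sqrt_nonneg _
  have h54 : 5 / 4 * x ≤ Real.sqrt (2 * x) := by nlinarith
  have hy_sqrt : Real.sqrt (2 * x - x ^ 2) ≤ y := by
    have h1 : Real.sqrt (2 * x - x ^ 2) ≤ Real.sqrt (y ^ 2) :=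
      Real.sqrt_le_sqrt (by nlinarith)
    rwa [Real.sqrt_sq hy0'.le] at h1
  have hstep1 : Real.sqrt (2 * x) - x / 2 ≤ Real.sqrt (2 * x - x ^ 2) := by
    have hnn : (0:ℝ) ≤ 2 * x - x ^ 2 := by nlinarith
    have hs2 : Real.sqrt (2 * x - x ^ 2) ^ 2 = 2 * x - x ^ 2 := Real.sq_sqrt hnn
    nlinarith [Real.sqrt_nonneg (2 * x - x ^ 2), hsq2x, h54, hsq2x0,
      sq_nonneg (Real.sqrt (2 * x) - x / 2 - Real.sqrt (2 * x - x ^ 2))]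
  have h2yx : 2 * Real.sqrt (2 * x) ≤ 2 * y + x := by linarith
  have htb : t ≤ 1 - y / 2 - x / 4 := by
    have hrhs : (0:ℝ) ≤ 1 - y / 2 - x / 4 := by linarith
    have hsq : t ^ 2 ≤ (1 - y / 2 - x / 4) ^ 2 := by
      rw [ht2]
      nlinarith [h2yx, hsq2x, hsq2x0]
    exact le_of_sq_le_sq hsq hrhs
  nlinarith [htb, h2yx, hsq2x, hsq2x0]

private lemma keyA_final {x t : ℝ} {m : ℕ} (hx0 : 0 < x) (ht0 : 0 ≤ t) (ht1 : t ≤ 1)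
    (hkey : x ≤ 2 * (1 - t) ^ 2) (hgeo : ((m:ℝ) + 1) * t ^ m * (1 - t) ≤ 1)
    {p : ℝ} (hpt : t ^ 2 = p) :
    x * (((m:ℝ) + 1) ^ 2 * p ^ m) ≤ 2 := by
  have hpt' : p ^ m = (t ^ m) ^ 2 := by rw [← hpt, ← pow_mul, Nat.mul_comm, pow_mul]
  have h1t : 0 ≤ 1 - t := by linarith
  have htm0 : (0:ℝ) ≤ t ^ m := pow_nonneg ht0 m
  have hp0 : (0:ℝ) ≤ p := by rw [← hpt]; positivity
  have hnn : 0 ≤ ((m:ℝ) + 1) * t ^ m * (1 - t) :=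
    mul_nonneg (mul_nonneg (by positivity) htm0) h1t
  have hq : (((m:ℝ) + 1) * t ^ m * (1 - t)) ^ 2 ≤ 1 := by nlinarith
  calc x * (((m:ℝ) + 1) ^ 2 * p ^ m)
      ≤ 2 * (1 - t) ^ 2 * (((m:ℝ) + 1) ^ 2 * p ^ m) := by
        apply mul_le_mul_of_nonneg_right hkey
          (mul_nonneg (by positivity) (pow_nonneg hp0 m))
    _ = 2 * (((m:ℝ) + 1) * t ^ m * (1 - t)) ^ 2 := by rw [hpt']; ring
    _ ≤ 2 := by nlinarith

private lemma keyB2 {x y : ℝ} (hx0 : 0 < x) (hx1 : x ≤ 1) (hy0 : 0 ≤ y) (hbx : 7 * y < x) :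
    x + y ≤ 8 * (x - (x + y) ^ 2 / 4) := by nlinarith [sq_nonneg (x + y)]


private lemma inner_eq_dot {d : ℕ} (x y : EuclideanSpace ℝ (Fin d)) :
    inner (𝕜 := ℝ) x y = (x : Fin d → ℝ) ⬝ᵥ (y : Fin d → ℝ) := by
  rw [PiLp.inner_apply]
  simp [dotProduct, mul_comm]

private lemma scalar_main (x y : ℝ) (hx0 : 0 < x) (hx1 : x ≤ 1) (hy0 : 0 ≤ y) (hxy : x + y ≤ 2)
    (c : ℝ) (a : ℕ → ℝ) (ha0 : a 0 = 0) (ha1 : a 1 = c)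
    (hrec : ∀ n : ℕ, a (n + 2) = (2 - x - y) * a (n + 1) - (1 - y) * a n) :
    ∀ n : ℕ, 1 ≤ n →
      x * a n ^ 2 ≤ 2 * c ^ 2 ∧ (x + y) * a n ^ 2 ≤ 8 * n * c ^ 2 := by
  have hc2 : (0:ℝ) ≤ c ^ 2 := sq_nonneg c
  by_cases hD : 4 * x ≤ (x + y) ^ 2
  · -- real roots case
    set sq := Real.sqrt ((x + y) ^ 2 - 4 * x) with hsq_def
    have hsq0 : 0 ≤ sq := Real.sqrt_nonneg _
    have hsq2 : sq ^ 2 = (x + y) ^ 2 - 4 * x := Real.sq_sqrt (by linarith)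
    set r1 := ((2 - x - y) + sq) / 2 with hr1_def
    set r2 := ((2 - x - y) - sq) / 2 with hr2_def
    have hxy_pos : 0 < x + y := by nlinarith
    have hsum : r1 + r2 = 2 - x - y := by rw [hr1_def, hr2_def]; ring
    have hprod : r1 * r2 = 1 - y := by
      rw [hr1_def, hr2_def]; linear_combination (-(1:ℝ)/4) * hsq2
    have hs0 : 0 ≤ 2 - x - y := by linarith
    have hr1_lt1 : r1 < 1 := by
      rw [hr1_def]; nlinarith [hsq2, hsq0]
    have hr2_le : r2 ≤ r1 := by rw [hr1_def, hr2_def]; linarith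
    have hr1_0 : 0 ≤ r1 := by rw [hr1_def]; linarith
    have habs : -r1 ≤ r2 := by rw [hr1_def, hr2_def]; linarith
    have hx_fact : (1 - r1) * (1 - r2) = x := by
      have h : (1 - r1) * (1 - r2) = 1 - (r1 + r2) + r1 * r2 := by ring
      rw [h, hsum, hprod]; ring
    have h1r1 : 0 ≤ 1 - r1 := by linarith
    have haeq : ∀ n, a n = c * gseq r1 r2 n := by
      have key : ∀ n, a n = c * gseq r1 r2 n ∧ a (n + 1) = c * gseq r1 r2 (n + 1) := by
        intro n
        induction n with
        | zero => exact ⟨by simp [ha0, gseq], by simp [ha1, gseq]⟩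
        | succ n ih =>
          refine ⟨ih.2, ?_⟩
          rw [hrec n, gseq_rec, hsum, hprod, ih.1, ih.2]
          ring
      exact fun n => (key n).1
    by_cases hr2_0 : 0 ≤ r2
    · -- 0 ≤ r2 ≤ r1 < 1
      have hr2_lt1 : r2 < 1 := lt_of_le_of_lt hr2_le hr1_lt1
      have h1r2 : 0 ≤ 1 - r2 := by linarith
      have hg0 : ∀ n, 0 ≤ gseq r1 r2 n := by
        intro n
        induction n with
        | zero => simp [gseq]
        | succ n ih =>
          rw [gseq_succ]
          have h1 := pow_nonneg hr2_0 n
          have h2 : 0 ≤ r1 * gseq r1 r2 n := mul_nonneg hr1_0 ih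
          linarith
      have hgb1 : ∀ n, (1 - r1) * gseq r1 r2 n ≤ 1 - r1 ^ n := by
        intro n
        induction n with
        | zero => simp [gseq]
        | succ n ih =>
          rw [gseq_succ]
          have hA : r1 * ((1 - r1) * gseq r1 r2 n) ≤ r1 * (1 - r1 ^ n) :=
            mul_le_mul_of_nonneg_left ih hr1_0
          have hp1 : r2 ^ n ≤ r1 ^ n := pow_le_pow_left₀ hr2_0 hr2_le n
          have hB : (1 - r1) * r2 ^ n ≤ (1 - r1) * r1 ^ n :=
            mul_le_mul_of_nonneg_left hp1 h1r1
          have hC : 0 ≤ (1 - r1) * (1 - r1 ^ n) :=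
            mul_nonneg h1r1 (by nlinarith [pow_le_one₀ hr1_0 hr1_lt1.le (n := n)])
          nlinarith [pow_succ r1 n]
      have hgb2 : ∀ n, (1 - r2) * gseq r1 r2 n ≤ 1 - r2 ^ n := by
        intro n
        induction n with
        | zero => simp [gseq]
        | succ n ih =>
          rw [gseq_succ']
          have hA : r2 * ((1 - r2) * gseq r1 r2 n) ≤ r2 * (1 - r2 ^ n) :=
            mul_le_mul_of_nonneg_left ih hr2_0
          have hp2 : r1 ^ n ≤ 1 := pow_le_one₀ hr1_0 hr1_lt1.le
          have hB : (1 - r2) * r1 ^ n ≤ (1 - r2) * 1 :=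
            mul_le_mul_of_nonneg_left hp2 h1r2
          nlinarith [pow_succ r2 n]
      have hgn : ∀ n, gseq r1 r2 n ≤ n := by
        intro n
        induction n with
        | zero => simp [gseq]
        | succ n ih =>
          rw [gseq_succ]
          push_cast
          have hp4 : r2 ^ n ≤ 1 := pow_le_one₀ hr2_0 hr2_lt1.le
          have h2 : r1 * gseq r1 r2 n ≤ 1 * n := by
            apply mul_le_mul hr1_lt1.le ih (hg0 n) zero_le_one
          linarith
      intro n hn
      have hg := hg0 n
      have h1 := hgb1 n
      have h2 := hgb2 n
      have hp3 : 0 ≤ r1 ^ n := pow_nonneg hr1_0 n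
      have hp4 : 0 ≤ r2 ^ n := pow_nonneg hr2_0 n
      have hgle : gseq r1 r2 n ≤ n := hgn n
      have hr1n1 : 1 - r1 ^ n ≤ 1 := by linarith
      have hr2n1 : 1 - r2 ^ n ≤ 1 := by linarith
      have hprod_le : ((1 - r1) * gseq r1 r2 n) * ((1 - r2) * gseq r1 r2 n) ≤ 1 := by
        have hnn : 0 ≤ (1 - r1) * gseq r1 r2 n := mul_nonneg h1r1 hg
        have hnn2 : 0 ≤ (1 - r2) * gseq r1 r2 n := mul_nonneg h1r2 hg
        calc ((1 - r1) * gseq r1 r2 n) * ((1 - r2) * gseq r1 r2 n)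
            ≤ (1 - r1 ^ n) * (1 - r2 ^ n) := by
              apply mul_le_mul h1 h2 hnn2 (by linarith)
          _ ≤ 1 := by nlinarith
      have hxg : x * gseq r1 r2 n ^ 2 ≤ 1 := by
        have : x * gseq r1 r2 n ^ 2 = ((1 - r1) * gseq r1 r2 n) * ((1 - r2) * gseq r1 r2 n) := by
          rw [← hx_fact]; ring
        linarith [hprod_le, this.ge, this.le]
      have hn1 : (1:ℝ) ≤ (n:ℝ) := by exact_mod_cast hn
      constructor
      · rw [haeq n]
        calc x * (c * gseq r1 r2 n) ^ 2 = (x * gseq r1 r2 n ^ 2) * c ^ 2 := by ring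
          _ ≤ 1 * c ^ 2 := mul_le_mul_of_nonneg_right hxg hc2
          _ ≤ 2 * c ^ 2 := by linarith
      · rw [haeq n]
        have hxyg : (x + y) * gseq r1 r2 n ^ 2 ≤ 2 * n := by
          have e1 : (1 - r1) * gseq r1 r2 n * gseq r1 r2 n ≤ 1 * n := by
            apply mul_le_mul (by linarith [hgb1 n, hp3]) hgle hg zero_le_one
          have e2 : (1 - r2) * gseq r1 r2 n * gseq r1 r2 n ≤ 1 * n := by
            apply mul_le_mul (by linarith [hgb2 n, hp4]) hgle hg zero_le_one
          have hxy_eq : x + y = (1 - r1) + (1 - r2) := by rw [hsum] at *; linarith [hsum]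
          nlinarith [e1, e2]
        calc (x + y) * (c * gseq r1 r2 n) ^ 2 = ((x + y) * gseq r1 r2 n ^ 2) * c ^ 2 := by ring
          _ ≤ (2 * n) * c ^ 2 := mul_le_mul_of_nonneg_right hxyg hc2
          _ ≤ 8 * n * c ^ 2 := by nlinarith
    · -- r2 < 0
      push_neg at hr2_0
      have hbound : ∀ n, 0 ≤ gseq r1 r2 (n + 1) ∧ gseq r1 r2 (n + 1) ≤ r1 ^ n := by
        intro n
        induction n with
        | zero => simp [gseq]
        | succ n ih =>
          rw [gseq_succ']
          have hp3 : 0 ≤ r1 ^ n := pow_nonneg hr1_0 n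
          have hmul : r2 * gseq r1 r2 (n + 1) ≥ r2 * r1 ^ n := by
            apply mul_le_mul_of_nonpos_left ih.2 hr2_0.le
          constructor
          · have : r1 ^ (n+1) + r2 * r1 ^ n = r1 ^ n * (r1 + r2) := by rw [pow_succ]; ring
            nlinarith [mul_nonneg hp3 (by rw [hsum]; linarith : (0:ℝ) ≤ r1 + r2)]
          · have : r2 * gseq r1 r2 (n + 1) ≤ 0 := mul_nonpos_of_nonpos_of_nonneg hr2_0.le ih.1
            linarith
      intro n hn
      obtain ⟨m, rfl⟩ : ∃ m, n = m + 1 := ⟨n - 1, by omega⟩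
      obtain ⟨hgl, hgu⟩ := hbound m
      have hr1m : r1 ^ m ≤ 1 := pow_le_one₀ hr1_0 hr1_lt1.le
      have hg2 : gseq r1 r2 (m + 1) ^ 2 ≤ 1 := by nlinarith
      have hn1 : (1:ℝ) ≤ ((m:ℝ) + 1) := by have := Nat.cast_nonneg (α := ℝ) m; linarith
      constructor
      · rw [haeq (m+1)]
        calc x * (c * gseq r1 r2 (m+1)) ^ 2 = (x * gseq r1 r2 (m+1) ^ 2) * c ^ 2 := by ring
          _ ≤ 1 * c ^ 2 := by
              apply mul_le_mul_of_nonneg_right _ hc2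
              nlinarith
          _ ≤ 2 * c ^ 2 := by linarith
      · rw [haeq (m+1)]
        calc (x + y) * (c * gseq r1 r2 (m+1)) ^ 2
            = ((x + y) * gseq r1 r2 (m+1) ^ 2) * c ^ 2 := by ring
          _ ≤ 2 * c ^ 2 := by
              apply mul_le_mul_of_nonneg_right _ hc2
              nlinarith
          _ ≤ 8 * ((m:ℕ) + 1 : ℕ) * c ^ 2 := by push_cast; nlinarith
  · -- complex roots case
    push_neg at hD
    obtain ⟨E, hE_def⟩ : ∃ E : ℝ, E = x - (x + y) ^ 2 / 4 := ⟨_, rfl⟩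
    have hE : 0 < E := by rw [hE_def]; linarith
    have hy1 : y < 1 := by nlinarith [sq_nonneg (x - 1)]
    obtain ⟨p, hp_def⟩ : ∃ p : ℝ, p = 1 - y := ⟨_, rfl⟩
    have hp0 : 0 < p := by rw [hp_def]; linarith
    have hp1 : p ≤ 1 := by rw [hp_def]; linarith
    obtain ⟨s, hs_def⟩ : ∃ s : ℝ, s = 2 - x - y := ⟨_, rfl⟩
    have hs0 : 0 ≤ s := by rw [hs_def]; linarith
    have hEs : E = p - s ^ 2 / 4 := by rw [hE_def, hp_def, hs_def]; ring
    obtain ⟨d, hd_def⟩ : ∃ d : ℕ → ℝ, d = fun n => a (n + 1) - s / 2 * a n := ⟨_, rfl⟩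
    have hGval : ∀ n, E * a n ^ 2 + d n ^ 2 = p ^ n * c ^ 2 := by
      intro n
      induction n with
      | zero =>
        have h0 : d 0 = a 1 - s / 2 * a 0 := by rw [hd_def]
        rw [h0, ha0, ha1, pow_zero]; ring
      | succ n ih =>
        have hdn : d n = a (n + 1) - s / 2 * a n := by rw [hd_def]
        have hdn1 : d (n + 1) = a (n + 2) - s / 2 * a (n + 1) := by rw [hd_def]
        have hstep : E * a (n+1) ^ 2 + d (n+1) ^ 2 = p * (E * a n ^ 2 + d n ^ 2) := by
          rw [hdn1, hdn, hrec n, hEs, hp_def, hs_def]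
          ring
        rw [hstep, ih, pow_succ]
        ring
    have hd2 : ∀ n, d n ^ 2 ≤ p ^ n * c ^ 2 := by
      intro n
      nlinarith [hGval n, sq_nonneg (a n), hE.le]
    have hEa : ∀ n, E * a n ^ 2 ≤ p ^ n * c ^ 2 := by
      intro n
      nlinarith [hGval n, sq_nonneg (d n)]
    obtain ⟨t, ht_def⟩ : ∃ t : ℝ, t = Real.sqrt p := ⟨_, rfl⟩
    have ht0 : 0 ≤ t := ht_def ▸ Real.sqrt_nonneg _
    have ht2 : t ^ 2 = p := ht_def ▸ Real.sq_sqrt hp0.le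
    have ht1 : t ≤ 1 := by nlinarith
    have hs2t : s / 2 ≤ t := by nlinarith [hEs, hE]
    have hC2 : ∀ n : ℕ, |a (n + 1)| ≤ ((n : ℝ) + 1) * t ^ n * |c| := by
      intro n
      induction n with
      | zero => simp [ha1]
      | succ n ih =>
        have hstep : a (n + 2) = s / 2 * a (n + 1) + d (n + 1) := by
          rw [hd_def]; ring
        have hdn : |d (n + 1)| ≤ t ^ (n + 1) * |c| := by
          apply abs_le_of_sq_le_sq _ (by positivity)
          have heq : (t ^ (n+1) * |c|) ^ 2 = p ^ (n+1) * c ^ 2 := by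
            rw [mul_pow, ← pow_mul, Nat.mul_comm, pow_mul, ht2, sq_abs]
          rw [heq]
          exact hd2 (n + 1)
        rw [hstep]
        calc |s / 2 * a (n + 1) + d (n + 1)| ≤ |s / 2 * a (n+1)| + |d (n+1)| := abs_add_le _ _
          _ = s / 2 * |a (n+1)| + |d (n+1)| := by
              rw [abs_mul, abs_of_nonneg (by linarith : (0:ℝ) ≤ s / 2)]
          _ ≤ t * (((n : ℝ) + 1) * t ^ n * |c|) + t ^ (n+1) * |c| := by
              have h3 : s / 2 * |a (n+1)| ≤ t * (((n : ℝ) + 1) * t ^ n * |c|) :=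
                mul_le_mul hs2t ih (abs_nonneg _) ht0
              linarith
          _ = (((n + 1 : ℕ) : ℝ) + 1) * t ^ (n + 1) * |c| := by push_cast; rw [pow_succ]; ring
    have haSq : ∀ m : ℕ, a (m + 1) ^ 2 ≤ ((m:ℝ) + 1) ^ 2 * p ^ m * c ^ 2 := by
      intro m
      have h := hC2 m
      have h3 : (((m:ℝ) + 1) * t ^ m * |c|) ^ 2 = ((m:ℝ)+1) ^ 2 * p ^ m * c ^ 2 := by
        rw [mul_pow, mul_pow, ← pow_mul, Nat.mul_comm, pow_mul, ht2, sq_abs]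
      calc a (m + 1) ^ 2 = |a (m + 1)| ^ 2 := (sq_abs _).symm
        _ ≤ (((m:ℝ) + 1) * t ^ m * |c|) ^ 2 := by
            apply pow_le_pow_left₀ (abs_nonneg _) h
        _ = ((m:ℝ)+1) ^ 2 * p ^ m * c ^ 2 := h3
    intro n hn
    obtain ⟨m, rfl⟩ : ∃ m, n = m + 1 := ⟨n - 1, by omega⟩
    have hn1 : (1:ℝ) ≤ ((m:ℝ) + 1) := by have := Nat.cast_nonneg (α := ℝ) m; linarith
    have hpow_cast : ((m + 1 : ℕ) : ℝ) = (m : ℝ) + 1 := by push_cast; ring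
    have hpn_le : p ^ (m + 1) ≤ p := by
      calc p ^ (m + 1) ≤ p ^ 1 := pow_le_pow_of_le_one hp0.le hp1 (by omega)
        _ = p := pow_one p
    have hpm0 : 0 ≤ p ^ m := pow_nonneg hp0.le m
    have hpm1 : p ^ m ≤ 1 := pow_le_one₀ hp0.le hp1
    -- the geometric decay: (m+1) * t^m * (1-t) ≤ 1
    have hgeo : ((m:ℝ) + 1) * t ^ m * (1 - t) ≤ 1 := by
      have := geo_aux ht0 ht1 (m + 1)
      simpa [hpow_cast] using this
    have hgeop : ((m:ℝ) + 1) * p ^ m * (1 - p) ≤ 1 := by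
      have := geo_aux hp0.le hp1 (m + 1)
      simpa [hpow_cast] using this
    constructor
    · -- bound A
      by_cases hc : (x + y) ^ 2 ≤ 2 * x * (1 + y)
      · have h1 : x * p ^ (m + 1) ≤ 2 * E := by
          have hxp : x * p ≤ 2 * E := by rw [hE_def, hp_def]; nlinarith
          nlinarith [hpn_le, hx0.le]
        have h2 : E * (x * a (m+1) ^ 2) ≤ E * (2 * c ^ 2) := by
          have h3 : x * (E * a (m+1) ^ 2) ≤ x * (p ^ (m+1) * c ^ 2) :=
            mul_le_mul_of_nonneg_left (hEa (m+1)) hx0.le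
          calc E * (x * a (m+1) ^ 2) = x * (E * a (m+1) ^ 2) := by ring
            _ ≤ x * (p ^ (m+1) * c ^ 2) := h3
            _ = (x * p ^ (m+1)) * c ^ 2 := by ring
            _ ≤ (2 * E) * c ^ 2 := mul_le_mul_of_nonneg_right h1 hc2
            _ = E * (2 * c ^ 2) := by ring
        exact le_of_mul_le_mul_left h2 hE
      · push_neg at hc
        have hkey : x ≤ 2 * (1 - t) ^ 2 :=
          keyA hx0 hx1 hy0 ht0 (by rw [ht2, hp_def]) hc
        have hfinal : x * (((m:ℝ) + 1) ^ 2 * p ^ m) ≤ 2 :=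
          keyA_final hx0 ht0 ht1 hkey hgeo ht2
        calc x * a (m+1) ^ 2 ≤ x * (((m:ℝ) + 1) ^ 2 * p ^ m * c ^ 2) :=
              mul_le_mul_of_nonneg_left (haSq m) hx0.le
          _ = (x * (((m:ℝ) + 1) ^ 2 * p ^ m)) * c ^ 2 := by ring
          _ ≤ 2 * c ^ 2 := mul_le_mul_of_nonneg_right hfinal hc2
    · -- bound B
      rw [hpow_cast]
      by_cases hbx : x ≤ 7 * y
      · have hy0' : 0 < y := by linarith
        have h1p : 1 - p = y := by rw [hp_def]; ring
        have hyg : ((m:ℝ) + 1) * p ^ m * y ≤ 1 := by rw [← h1p]; exact hgeop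
        have hxy8 : x + y ≤ 8 * y := by linarith
        calc (x + y) * a (m+1) ^ 2 ≤ (x + y) * (((m:ℝ) + 1) ^ 2 * p ^ m * c ^ 2) :=
              mul_le_mul_of_nonneg_left (haSq m) (by linarith)
          _ = ((x + y) * (((m:ℝ) + 1) * p ^ m)) * (((m:ℝ) + 1) * c ^ 2) := by ring
          _ ≤ (8 * y * (((m:ℝ) + 1) * p ^ m)) * (((m:ℝ) + 1) * c ^ 2) := by
              apply mul_le_mul_of_nonneg_right _ (by positivity)
              apply mul_le_mul_of_nonneg_right hxy8 (by positivity)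
          _ = (8 * (((m:ℝ) + 1) * p ^ m * y)) * (((m:ℝ) + 1) * c ^ 2) := by ring
          _ ≤ (8 * 1) * (((m:ℝ) + 1) * c ^ 2) := by
              apply mul_le_mul_of_nonneg_right _ (by positivity)
              linarith
          _ = 8 * ((m:ℝ) + 1) * c ^ 2 := by ring
      · push_neg at hbx
        have h8E : x + y ≤ 8 * E := by rw [hE_def]; exact keyB2 hx0 hx1 hy0 hbx
        have hpn1 : p ^ (m + 1) ≤ 1 := pow_le_one₀ hp0.le hp1
        have hxy0 : (0:ℝ) ≤ x + y := by linarith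
        have h2 : E * ((x + y) * a (m+1) ^ 2) ≤ E * (8 * ((m:ℝ) + 1) * c ^ 2) := by
          have h3 : (x + y) * (E * a (m+1) ^ 2) ≤ (x + y) * (p ^ (m+1) * c ^ 2) :=
            mul_le_mul_of_nonneg_left (hEa (m+1)) hxy0
          have h4 : (x + y) * p ^ (m + 1) ≤ 8 * E * ((m:ℝ) + 1) := by
            have h5 : (x + y) * p ^ (m + 1) ≤ (x + y) * 1 :=
              mul_le_mul_of_nonneg_left hpn1 hxy0
            have h6 : (8 * E) * 1 ≤ (8 * E) * ((m:ℝ) + 1) :=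
              mul_le_mul_of_nonneg_left hn1 (by linarith)
            calc (x + y) * p ^ (m + 1) ≤ (x + y) * 1 := h5
              _ = x + y := by ring
              _ ≤ 8 * E := h8E
              _ = (8 * E) * 1 := by ring
              _ ≤ (8 * E) * ((m:ℝ) + 1) := h6
              _ = 8 * E * ((m:ℝ) + 1) := by ring
          calc E * ((x + y) * a (m+1) ^ 2) = (x + y) * (E * a (m+1) ^ 2) := by ring
            _ ≤ (x + y) * (p ^ (m+1) * c ^ 2) := h3
            _ = ((x + y) * p ^ (m+1)) * c ^ 2 := by ring
            _ ≤ (8 * E * ((m:ℝ) + 1)) * c ^ 2 := mul_le_mul_of_nonneg_right h4 hc2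
            _ = E * (8 * ((m:ℝ) + 1) * c ^ 2) := by ring
        exact le_of_mul_le_mul_left h2 hE

/-- Corollary 1 (noiseless case): for 0 < α ≤ 1/L and 0 ≤ β ≤ 2/L - α, the second-order
algorithm satisfies f(θ_n) - f(θ*) ≤ min{‖θ_0 - θ*‖²/(αn²), 4‖θ_0 - θ*‖²/((α+β)n)}. -/
theorem stmt_12 (d : ℕ) (hd : 1 ≤ d)
    (H : Matrix (Fin d) (Fin d) ℝ) (hHsymm : H.IsSymm) (hHpd : H.PosDef)
    (L : ℝ) (hL0 : 0 < L)
    (hL : ∀ v : Fin d → ℝ, v ⬝ᵥ H.mulVec v ≤ L * (v ⬝ᵥ v))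
    (q θstar : Fin d → ℝ) (hθstar : H.mulVec θstar = q)
    (α β : ℝ) (hα0 : 0 < α) (hα : α ≤ 1 / L) (hβ0 : 0 ≤ β) (hβ : β ≤ 2 / L - α)
    (θ : ℕ → Fin d → ℝ) (hθ1 : θ 1 = θ 0)
    (η : ℕ → Fin d → ℝ) (hη : ∀ n, η n = (n : ℝ) • (θ n - θstar))
    (hrec : ∀ n : ℕ, 1 ≤ n →
      η (n + 1) = (η n - α • H.mulVec (η n))
        + ((η n - η (n - 1)) - β • H.mulVec (η n - η (n - 1)))) :
    ∀ n : ℕ, 1 ≤ n →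
      ((1 : ℝ) / 2 * (θ n ⬝ᵥ H.mulVec (θ n)) - q ⬝ᵥ θ n)
          - ((1 : ℝ) / 2 * (θstar ⬝ᵥ H.mulVec θstar) - q ⬝ᵥ θstar)
        ≤ min (((θ 0 - θstar) ⬝ᵥ (θ 0 - θstar)) / (α * (n : ℝ) ^ 2))
            (4 * ((θ 0 - θstar) ⬝ᵥ (θ 0 - θstar)) / ((α + β) * (n : ℝ))) := by
  intro n hn
  have hαβ : 0 < α + β := by linarith
  have hαβL : α + β ≤ 2 / L := by linarith
  have hH : H.IsHermitian := hHsymm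
  set lam := hH.eigenvalues with hlam_def
  set u : Fin d → Fin d → ℝ := fun i => ⇑(hH.eigenvectorBasis i) with hu_def
  have hmul : ∀ i, H *ᵥ u i = lam i • u i := fun i => hH.mulVec_eigenvectorBasis i
  have huu : ∀ i, u i ⬝ᵥ u i = 1 := by
    intro i
    have h := orthonormal_iff_ite.mp hH.eigenvectorBasis.orthonormal i i
    rw [inner_eq_dot] at h
    simpa using h
  have hsum : ∀ v w : Fin d → ℝ, ∑ i, ((v ⬝ᵥ u i) * (u i ⬝ᵥ w)) = v ⬝ᵥ w := by
    intro v w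
    have h := (hH.eigenvectorBasis).sum_inner_mul_inner (𝕜 := ℝ) (WithLp.toLp 2 v) (WithLp.toLp 2 w)
    simp_rw [inner_eq_dot] at h
    exact h
  have hlam_pos : ∀ i, 0 < lam i := fun i => hHpd.eigenvalues_pos i
  have hlam_le : ∀ i, lam i ≤ L := by
    intro i
    have h1 := hL (u i)
    rw [hmul i, dotProduct_smul, huu i] at h1
    simpa using h1
  -- symmetric dot identities
  have hvecH : ∀ v : Fin d → ℝ, v ᵥ* H = H *ᵥ v := by
    intro v
    rw [← Matrix.mulVec_transpose, hHsymm]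
  have hsymm_dot : ∀ v w : Fin d → ℝ, v ⬝ᵥ (H *ᵥ w) = w ⬝ᵥ (H *ᵥ v) := by
    intro v w
    rw [dotProduct_mulVec, hvecH, dotProduct_comm]
  have hdotH : ∀ (w : Fin d → ℝ) i, (H *ᵥ w) ⬝ᵥ u i = lam i * (w ⬝ᵥ u i) := by
    intro w i
    rw [dotProduct_comm, hsymm_dot, hmul i, dotProduct_smul, smul_eq_mul]
  -- coefficients
  set a : Fin d → ℕ → ℝ := fun i k => η k ⬝ᵥ u i with ha_def
  set cc : Fin d → ℝ := fun i => (θ 0 - θstar) ⬝ᵥ u i with hcc_def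
  have hη0 : η 0 = 0 := by rw [hη 0]; simp
  have hη1 : η 1 = θ 0 - θstar := by rw [hη 1, hθ1]; simp
  have ha0 : ∀ i, a i 0 = 0 := by intro i; simp [ha_def, hη0]
  have ha1 : ∀ i, a i 1 = cc i := by intro i; simp [ha_def, hcc_def, hη1]
  have hrec_i : ∀ i k, a i (k + 2)
      = (2 - α * lam i - β * lam i) * a i (k + 1) - (1 - β * lam i) * a i k := by
    intro i k
    have h := hrec (k + 1) (by omega)
    simp only [Nat.add_sub_cancel] at h
    have h2 := congrArg (fun w => w ⬝ᵥ u i) h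
    simp only [add_dotProduct, sub_dotProduct, smul_dotProduct, smul_eq_mul] at h2
    rw [hdotH (η (k+1)) i, hdotH (η (k+1) - η k) i] at h2
    simp only [sub_dotProduct] at h2
    show η (k + 1 + 1) ⬝ᵥ u i = _
    rw [h2]
    simp only [ha_def]
    ring
  have hbounds : ∀ i, (α * lam i) * a i n ^ 2 ≤ 2 * cc i ^ 2 ∧
      ((α * lam i) + β * lam i) * a i n ^ 2 ≤ 8 * n * cc i ^ 2 := by
    intro i
    have hx0 : 0 < α * lam i := mul_pos hα0 (hlam_pos i)
    have hx1 : α * lam i ≤ 1 := by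
      calc α * lam i ≤ (1 / L) * lam i :=
            mul_le_mul_of_nonneg_right hα (hlam_pos i).le
        _ ≤ (1 / L) * L := mul_le_mul_of_nonneg_left (hlam_le i) (by positivity)
        _ = 1 := by field_simp
    have hy0 : 0 ≤ β * lam i := mul_nonneg hβ0 (hlam_pos i).le
    have hxy : α * lam i + β * lam i ≤ 2 := by
      have h1 : (α + β) * lam i ≤ (2 / L) * lam i :=
        mul_le_mul_of_nonneg_right hαβL (hlam_pos i).le
      have h2 : (2 / L) * lam i ≤ (2 / L) * L :=
        mul_le_mul_of_nonneg_left (hlam_le i) (by positivity)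
      have h3 : (2 / L) * L = 2 := by field_simp
      nlinarith
    exact scalar_main (α * lam i) (β * lam i) hx0 hx1 hy0 hxy (cc i) (a i)
      (ha0 i) (ha1 i) (hrec_i i) n hn
  -- gap rewriting
  have hq : q = H *ᵥ θstar := hθstar.symm
  set w := θ n - θstar with hw_def
  have hgap : ((1 : ℝ) / 2 * (θ n ⬝ᵥ H *ᵥ θ n) - q ⬝ᵥ θ n)
      - ((1 : ℝ) / 2 * (θstar ⬝ᵥ H *ᵥ θstar) - q ⬝ᵥ θstar)
      = 1 / 2 * (w ⬝ᵥ (H *ᵥ w)) := by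
    rw [hq, hw_def]
    have hcross := hsymm_dot (θ n) θstar
    have hq1 : (H *ᵥ θstar) ⬝ᵥ θ n = θ n ⬝ᵥ (H *ᵥ θstar) := dotProduct_comm _ _
    have hq2 : (H *ᵥ θstar) ⬝ᵥ θstar = θstar ⬝ᵥ (H *ᵥ θstar) := dotProduct_comm _ _
    have hexp : (θ n - θstar) ⬝ᵥ (H *ᵥ (θ n - θstar))
        = θ n ⬝ᵥ (H *ᵥ θ n) - θ n ⬝ᵥ (H *ᵥ θstar) - θstar ⬝ᵥ (H *ᵥ θ n)
          + θstar ⬝ᵥ (H *ᵥ θstar) := by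
      rw [Matrix.mulVec_sub, sub_dotProduct, dotProduct_sub, dotProduct_sub]
      ring
    rw [hexp, hq1, hq2]
    rw [← hcross]
    ring
  set N : ℝ := (n : ℝ) with hN_def
  have hN1 : 1 ≤ N := by rw [hN_def]; exact_mod_cast hn
  have hN0 : 0 < N := by linarith
  have hwη : w = N⁻¹ • η n := by
    rw [hw_def, hη n, smul_smul, ← hN_def, inv_mul_cancel₀ hN0.ne', one_smul]
  set S := ∑ i, lam i * a i n ^ 2 with hS_def
  have hHspec : η n ⬝ᵥ (H *ᵥ η n) = S := by
    rw [hS_def, ← hsum (η n) (H *ᵥ η n)]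
    apply Finset.sum_congr rfl
    intro i _
    have h1 : u i ⬝ᵥ (H *ᵥ η n) = (H *ᵥ η n) ⬝ᵥ u i := dotProduct_comm _ _
    rw [h1, hdotH (η n) i]
    simp only [ha_def]
    ring
  have hwHw : w ⬝ᵥ (H *ᵥ w) = S / N ^ 2 := by
    rw [hwη, smul_dotProduct, Matrix.mulVec_smul, dotProduct_smul, hHspec,
      smul_eq_mul, smul_eq_mul]
    rw [pow_two, div_eq_mul_inv, mul_inv]
    ring
  set V := (θ 0 - θstar) ⬝ᵥ (θ 0 - θstar) with hV_def
  have hVspec : V = ∑ i, cc i ^ 2 := by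
    rw [hV_def, ← hsum (θ 0 - θstar) (θ 0 - θstar)]
    apply Finset.sum_congr rfl
    intro i _
    have : u i ⬝ᵥ (θ 0 - θstar) = (θ 0 - θstar) ⬝ᵥ u i := dotProduct_comm _ _
    rw [this]
    simp only [hcc_def]
    ring
  have hS1 : α * S ≤ 2 * V := by
    rw [hS_def, hVspec, Finset.mul_sum, Finset.mul_sum]
    apply Finset.sum_le_sum
    intro i _
    have := (hbounds i).1
    nlinarith [this]
  have hS2 : (α + β) * S ≤ 8 * N * V := by
    rw [hS_def, hVspec, Finset.mul_sum, Finset.mul_sum]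
    apply Finset.sum_le_sum
    intro i _
    have h := (hbounds i).2
    have hcast : ((n : ℕ) : ℝ) = N := rfl
    nlinarith [h]
  rw [hgap, hwHw]
  have hhalf : 1 / 2 * (S / N ^ 2) = S / (2 * N ^ 2) := by ring
  rw [hhalf]
  apply le_min
  · rw [div_le_div_iff₀ (by positivity : (0:ℝ) < 2 * N ^ 2) (by positivity : (0:ℝ) < α * N ^ 2)]
    calc S * (α * N ^ 2) = (α * S) * N ^ 2 := by ring
      _ ≤ (2 * V) * N ^ 2 := mul_le_mul_of_nonneg_right hS1 (sq_nonneg N)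
      _ = V * (2 * N ^ 2) := by ring
  · rw [div_le_div_iff₀ (by positivity : (0:ℝ) < 2 * N ^ 2)
      (by positivity : (0:ℝ) < (α + β) * N)]
    calc S * ((α + β) * N) = ((α + β) * S) * N := by ring
      _ ≤ (8 * N * V) * N := mul_le_mul_of_nonneg_right hS2 hN0.le
      _ = 4 * V * (2 * N ^ 2) := by ring
end

section
/- Let d ≥ 1, let H be a d×d real symmetric positive-definite matrix, let L > 0 satisfy ⟨v, Hv⟩ ≤ L‖v‖² for all v ∈ ℝ^d, let q ∈ ℝ^d, f(θ) = ½⟨θ, Hθ⟩ − ⟨q, θ⟩, and θ* = H⁻¹q its unique minimizer. Let α, β ∈ ℝ with 0 ≤ α ≤ 1/L, 0 ≤ β ≤ 2/L − α, and α + β > 0, and let (θ_n)_{n≥0} be defined by θ_1 = θ_0 and, with η_n = n(θ_n − θ*), by η_{n+1} = (I − αH)η_n + (I − βH)(η_n − η_{n−1}) for n ≥ 1. Then for all n ≥ 1: f(θ_n) − f(θ*) ≤ 8‖H^{−1/2}(θ_0 − θ*)‖²/((α+β)² n²), where H^{−1/2} is the inverse of the positive-definite square root of H. -/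
open Matrix

/-- The square root of a positive semidefinite matrix, as `Matrix.PosSemidef.sqrt` was defined in
Mathlib of December 2024 (removed since). -/
noncomputable def Matrix.PosSemidef.sqrt {n : Type*} [Fintype n] [DecidableEq n]
    {A : Matrix n n ℝ} (hA : A.PosSemidef) : Matrix n n ℝ :=
  hA.isHermitian.eigenvectorUnitary.1 * diagonal ((√·) ∘ hA.isHermitian.eigenvalues) *
    (star hA.isHermitian.eigenvectorUnitary : Matrix n n ℝ)

open Finset

private lemma geom_shift1 {x y : ℂ} (n : ℕ) :
    ∑ k ∈ range (n+1), x ^ k * y ^ (n - k)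
      = x * ∑ k ∈ range n, x ^ k * y ^ (n - 1 - k) + y ^ n := by
  rw [Finset.sum_range_succ']
  rw [Finset.mul_sum]
  simp only [pow_zero, one_mul, Nat.sub_zero]
  congr 1
  apply Finset.sum_congr rfl
  intro k hk
  rw [show n - (k+1) = n - 1 - k from by omega]
  ring

private lemma geom_shift2 {x y : ℂ} (n : ℕ) :
    ∑ k ∈ range (n+1), x ^ k * y ^ (n - k)
      = y * ∑ k ∈ range n, x ^ k * y ^ (n - 1 - k) + x ^ n := by
  rw [Finset.sum_range_succ, Finset.mul_sum]
  simp only [Nat.sub_self, pow_zero, mul_one]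
  congr 1
  apply Finset.sum_congr rfl
  intro k hk
  have hk' : k < n := Finset.mem_range.mp hk
  rw [show n - k = (n - 1 - k) + 1 from by omega]
  ring

private noncomputable def Sseq (x y : ℂ) (n : ℕ) : ℂ := ∑ k ∈ range n, x ^ k * y ^ (n - 1 - k)

private lemma Sseq_zero (x y : ℂ) : Sseq x y 0 = 0 := by simp [Sseq]

private lemma Sseq_one (x y : ℂ) : Sseq x y 1 = 1 := by simp [Sseq]

private lemma Sseq_rec (x y : ℂ) (n : ℕ) :
    Sseq x y (n+2) = (x + y) * Sseq x y (n+1) - x * y * Sseq x y n := by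
  have h1 : Sseq x y (n+2) = y * Sseq x y (n+1) + x ^ (n+1) := by
    have := geom_shift2 (x := x) (y := y) (n+1)
    simpa [Sseq] using this
  have h2 : Sseq x y (n+1) = x * Sseq x y n + y ^ n := by
    have := geom_shift1 (x := x) (y := y) n
    simpa [Sseq] using this
  have h3 : Sseq x y (n+2) = x * Sseq x y (n+1) + y ^ (n+1) := by
    have := geom_shift1 (x := x) (y := y) (n+1)
    simpa [Sseq] using this
  have hy : (y:ℂ) ^ n = Sseq x y (n+1) - x * Sseq x y n := by rw [h2]; ring
  rw [h3, pow_succ, hy]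
  ring

private lemma Sseq_abs_le {x y : ℂ} {ρ : ℝ} (hρ : 0 ≤ ρ)
    (hx : ‖x‖ ≤ ρ) (hy : ‖y‖ ≤ ρ) (n : ℕ) :
    ‖Sseq x y n‖ ≤ n * ρ ^ (n - 1) := by
  calc ‖Sseq x y n‖ ≤ ∑ k ∈ range n, ‖x ^ k * y ^ (n - 1 - k)‖ :=
        norm_sum_le _ _
    _ ≤ ∑ k ∈ range n, ρ ^ (n-1) := by
        apply Finset.sum_le_sum
        intro k hk
        have hk' : k < n := Finset.mem_range.mp hk
        rw [norm_mul, norm_pow, norm_pow]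
        calc ‖x‖ ^ k * ‖y‖ ^ (n-1-k) ≤ ρ ^ k * ρ ^ (n-1-k) := by
              apply mul_le_mul (pow_le_pow_left₀ (norm_nonneg _) hx k)
                (pow_le_pow_left₀ (norm_nonneg _) hy _) (by positivity) (by positivity)
          _ = ρ ^ (n-1) := by rw [← pow_add]; congr 1; omega
    _ = n * ρ ^ (n-1) := by rw [Finset.sum_const, Finset.card_range, nsmul_eq_mul]

private lemma Sseq_abs_le' {x y : ℂ} (hxy : x ≠ y) (n : ℕ) :
    ‖Sseq x y n‖ ≤ (‖x‖ ^ n + ‖y‖ ^ n) / ‖x - y‖ := by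
  have h : Sseq x y n * (x - y) = x ^ n - y ^ n := geom_sum₂_mul x y n
  have hxy' : ‖x - y‖ ≠ 0 := by
    simpa [sub_eq_zero] using hxy
  have : ‖Sseq x y n‖ * ‖x - y‖ = ‖x ^ n - y ^ n‖ := by
    rw [← norm_mul, h]
  rw [le_div_iff₀ (lt_of_le_of_ne (norm_nonneg _) (Ne.symm hxy'))]
  rw [this]
  calc ‖x ^ n - y ^ n‖ ≤ ‖x ^ n‖ + ‖y ^ n‖ :=
        norm_sub_le _ _
    _ = ‖x‖ ^ n + ‖y‖ ^ n := by rw [norm_pow, norm_pow]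

private lemma nat_mul_pow_le {ρ : ℝ} (hρ0 : 0 ≤ ρ) (hρ1 : ρ < 1) (n : ℕ) :
    (n : ℝ) * ρ ^ (n - 1) ≤ 1 / (1 - ρ) := by
  have h1ρ : 0 < 1 - ρ := by linarith
  have h2 : (n : ℝ) * ρ ^ (n-1) ≤ ∑ k ∈ range n, ρ ^ k := by
    calc (n : ℝ) * ρ ^ (n-1) = ∑ _k ∈ range n, ρ ^ (n-1) := by
          rw [Finset.sum_const, Finset.card_range, nsmul_eq_mul]
      _ ≤ ∑ k ∈ range n, ρ ^ k := by
          apply Finset.sum_le_sum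
          intro k hk
          have hk' := Finset.mem_range.mp hk
          exact pow_le_pow_of_le_one hρ0 hρ1.le (by omega)
  have h3 : ∑ k ∈ range n, ρ ^ k ≤ 1 / (1 - ρ) := by
    rw [geom_sum_eq (by intro h; rw [h] at hρ1; exact lt_irrefl 1 hρ1 : ρ ≠ 1)]
    rw [show (ρ^n - 1)/(ρ - 1) = (1 - ρ^n)/(1-ρ) by rw [← neg_div_neg_eq]; ring_nf]
    gcongr
    have : 0 ≤ ρ ^ n := by positivity
    linarith
  linarith

private lemma le_of_sq_le_sq' {a b : ℝ} (ha : 0 ≤ a) (hb : 0 ≤ b) (h : a^2 ≤ b^2) : a ≤ b := by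
  nlinarith

private lemma rho_case {x y : ℂ} {s : ℝ} (hs0 : 0 < s) (hs2 : s ≤ 2)
    (hx : ‖x‖ ≤ 1 - s/4) (hy : ‖y‖ ≤ 1 - s/4) (n : ℕ) :
    ‖Sseq x y n‖ ≤ 4 / s := by
  have hρ0 : (0:ℝ) ≤ 1 - s/4 := by linarith
  have hρ1 : 1 - s/4 < 1 := by linarith
  calc ‖Sseq x y n‖ ≤ n * (1 - s/4) ^ (n-1) := Sseq_abs_le hρ0 hx hy n
    _ ≤ 1 / (1 - (1 - s/4)) := nat_mul_pow_le hρ0 hρ1 n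
    _ = 4 / s := by rw [show (1:ℝ) - (1 - s/4) = s/4 by ring, one_div_div]

private lemma key_scalar (t m μ : ℝ) (ht0 : 0 ≤ t) (ht1 : t ≤ 1) (hm0 : 0 ≤ m)
    (hs0 : 0 < t + m) (hs2 : t + m ≤ 2)
    (u : ℕ → ℝ) (h0 : u 0 = 0) (h1 : u 1 = μ)
    (hrec : ∀ n : ℕ, 1 ≤ n → u (n+1) = (2 - (t+m)) * u n - (1-m) * u (n-1)) :
    ∀ n, |u n| ≤ 4 / (t+m) * |μ| := by
  set s := t + m with hs
  set D := s^2 - 4*t with hD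
  set z : ℂ := if 0 ≤ D then ((Real.sqrt D : ℝ) : ℂ) else Complex.I * ((Real.sqrt (-D) : ℝ) : ℂ)
    with hz
  have hz2 : z ^ 2 = (D : ℂ) := by
    rw [hz]; split_ifs with h
    · rw [← Complex.ofReal_pow, Real.sq_sqrt h]
    · have h' : 0 ≤ -D := by linarith
      rw [mul_pow, Complex.I_sq, ← Complex.ofReal_pow, Real.sq_sqrt h']
      push_cast; ring
  set x : ℂ := (((2 - s : ℝ) : ℂ) + z) / 2 with hx
  set y : ℂ := (((2 - s : ℝ) : ℂ) - z) / 2 with hy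
  have hadd : x + y = ((2 - s : ℝ) : ℂ) := by rw [hx, hy]; ring
  have hmul : x * y = ((1 - m : ℝ) : ℂ) := by
    have hxy : x * y = ((((2 - s : ℝ) : ℂ))^2 - (D:ℂ)) / 4 := by rw [hx, hy, ← hz2]; ring
    rw [hxy, hD, hs]; push_cast; ring
  have hsub : x - y = z := by rw [hx, hy]; ring
  have hu : ∀ n, (u n : ℂ) = (μ:ℂ) * Sseq x y n := by
    have key : ∀ n, (u n : ℂ) = (μ:ℂ) * Sseq x y n ∧
        (u (n+1) : ℂ) = (μ:ℂ) * Sseq x y (n+1) := by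
      intro n
      induction n with
      | zero => exact ⟨by simp [h0, Sseq_zero], by simp [h1, Sseq_one]⟩
      | succ k ih =>
        refine ⟨ih.2, ?_⟩
        have hr := hrec (k+1) (by omega)
        simp only [Nat.add_sub_cancel] at hr
        have hcast : (u (k+1+1) : ℂ)
            = ((2 - s : ℝ):ℂ) * (u (k+1) : ℂ) - ((1 - m : ℝ):ℂ) * (u k : ℂ) := by
          rw [hr]; push_cast; ring
        rw [hcast, ih.1, ih.2, show k+1+1 = k+2 from rfl, Sseq_rec, hadd, hmul]
        ring
    exact fun n => (key n).1
  have habs : ∀ n, |u n| = |μ| * ‖Sseq x y n‖ := by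
    intro n
    have h := congrArg (‖·‖) (hu n)
    rwa [Complex.norm_real, Real.norm_eq_abs, norm_mul, Complex.norm_real, Real.norm_eq_abs] at h
  suffices hSb : ∀ n, 1 ≤ n → ‖Sseq x y n‖ ≤ 4 / s by
    intro n
    match n with
    | 0 => rw [habs 0, Sseq_zero, norm_zero, mul_zero]; positivity
    | (k+1) =>
      rw [habs (k+1), mul_comm]
      exact mul_le_mul_of_nonneg_right (hSb (k+1) (by omega)) (abs_nonneg μ)
  by_cases hA : 16*t ≤ 3*s^2
  · -- well-separated real roots
    have hD0 : 0 ≤ D := by rw [hD]; nlinarith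
    have hzr : z = ((Real.sqrt D : ℝ) : ℂ) := by rw [hz, if_pos hD0]
    have hsd1 : s/2 ≤ Real.sqrt D := by
      have : Real.sqrt ((s/2)^2) ≤ Real.sqrt D := Real.sqrt_le_sqrt (by rw [hD]; nlinarith)
      rwa [Real.sqrt_sq (by linarith)] at this
    have hsd2 : Real.sqrt D ≤ s := by
      have : Real.sqrt D ≤ Real.sqrt (s^2) := Real.sqrt_le_sqrt (by rw [hD]; nlinarith)
      rwa [Real.sqrt_sq (by linarith)] at this
    have hsq0 : 0 ≤ Real.sqrt D := Real.sqrt_nonneg D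
    have hxr : x = (((2 - s + Real.sqrt D)/2 : ℝ) : ℂ) := by rw [hx, hzr]; push_cast; ring
    have hyr : y = (((2 - s - Real.sqrt D)/2 : ℝ) : ℂ) := by rw [hy, hzr]; push_cast; ring
    have hax : ‖x‖ ≤ 1 := by
      rw [hxr, Complex.norm_real, Real.norm_eq_abs, abs_le]; constructor <;> [linarith; linarith]
    have hay : ‖y‖ ≤ 1 := by
      rw [hyr, Complex.norm_real, Real.norm_eq_abs, abs_le]; constructor <;> [linarith; linarith]
    have hxy : x ≠ y := by
      intro hcon
      have : x - y = 0 := by rw [hcon, sub_self]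
      rw [hsub, hzr] at this
      have : Real.sqrt D = 0 := by exact_mod_cast this
      linarith
    have habsxy : ‖x - y‖ = Real.sqrt D := by
      rw [hsub, hzr, Complex.norm_real, Real.norm_eq_abs, abs_of_nonneg hsq0]
    intro n hn
    calc ‖Sseq x y n‖
        ≤ (‖x‖ ^ n + ‖y‖ ^ n) / ‖x - y‖ := Sseq_abs_le' hxy n
      _ ≤ (1 + 1) / (s/2) := by
          rw [habsxy]
          apply div_le_div₀ (by norm_num) ?_ (by linarith) hsd1
          have h1 : ‖x‖ ^ n ≤ 1 := pow_le_one₀ (norm_nonneg x) hax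
          have h2 : ‖y‖ ^ n ≤ 1 := pow_le_one₀ (norm_nonneg y) hay
          linarith
      _ = 4 / s := by rw [show (1:ℝ)+1 = 2 by norm_num]; field_simp; ring
  · push_neg at hA
    by_cases hD0 : 0 ≤ D
    · -- real roots close together
      have hzr : z = ((Real.sqrt D : ℝ) : ℂ) := by rw [hz, if_pos hD0]
      have hsd2 : Real.sqrt D ≤ s/2 := by
        have : Real.sqrt D ≤ Real.sqrt ((s/2)^2) := Real.sqrt_le_sqrt (by rw [hD]; nlinarith)
        rwa [Real.sqrt_sq (by linarith)] at this
      have hsq0 : 0 ≤ Real.sqrt D := Real.sqrt_nonneg D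
      have hxr : x = (((2 - s + Real.sqrt D)/2 : ℝ) : ℂ) := by rw [hx, hzr]; push_cast; ring
      have hyr : y = (((2 - s - Real.sqrt D)/2 : ℝ) : ℂ) := by rw [hy, hzr]; push_cast; ring
      have hax : ‖x‖ ≤ 1 - s/4 := by
        rw [hxr, Complex.norm_real, Real.norm_eq_abs, abs_le]; constructor <;> [linarith; linarith]
      have hay : ‖y‖ ≤ 1 - s/4 := by
        rw [hyr, Complex.norm_real, Real.norm_eq_abs, abs_le]; constructor <;> [linarith; linarith]
      exact fun n _ => rho_case hs0 hs2 hax hay n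
    · -- complex roots
      push_neg at hD0
      have hDneg : 0 < -D := by linarith
      have hzr : z = Complex.I * ((Real.sqrt (-D) : ℝ) : ℂ) := by rw [hz, if_neg (by linarith)]
      have hconj : (starRingEnd ℂ) x = y := by
        rw [hx, hy, hzr]
        simp [_root_.map_add, _root_.map_div₀, _root_.map_sub, _root_.map_mul, _root_.map_ofNat, Complex.conj_ofReal,
          Complex.conj_I]
        ring
      have hay_eq : ‖y‖ = ‖x‖ := by rw [← hconj, Complex.norm_conj]
      have h1m : (‖x‖)^2 = 1 - m := by
        have hmc : x * (starRingEnd ℂ) x = ((1-m : ℝ) : ℂ) := by rw [hconj, hmul]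
        rw [Complex.mul_conj] at hmc
        have : Complex.normSq x = 1 - m := by exact_mod_cast hmc
        rw [Complex.sq_norm, this]
      have hax1 : ‖x‖ ≤ 1 := by nlinarith [norm_nonneg x]
      by_cases hB : 16*t ≤ 8*s + s^2
      · -- contraction case
        have hax : ‖x‖ ≤ 1 - s/4 := by
          apply le_of_sq_le_sq' (norm_nonneg x) (by linarith)
          rw [h1m]; nlinarith
        have hay : ‖y‖ ≤ 1 - s/4 := by rw [hay_eq]; exact hax
        exact fun n _ => rho_case hs0 hs2 hax hay n
      · push_neg at hB
        have hsq0 : 0 < Real.sqrt (-D) := Real.sqrt_pos.mpr hDneg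
        have hxy : x ≠ y := by
          intro hcon
          have h' : x - y = 0 := by rw [hcon, sub_self]
          rw [hsub, hzr] at h'
          have h'' : Complex.I = 0 ∨ ((Real.sqrt (-D) : ℝ) : ℂ) = 0 := mul_eq_zero.mp h'
          rcases h'' with h'' | h''
          · exact Complex.I_ne_zero h''
          · have : Real.sqrt (-D) = 0 := by exact_mod_cast h''
            linarith
        have habsxy : ‖x - y‖ = Real.sqrt (-D) := by
          rw [hsub, hzr, norm_mul, Complex.norm_I, Complex.norm_real, Real.norm_eq_abs, one_mul,
            abs_of_nonneg hsq0.le]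
        have hkey : s * ‖x‖ ≤ 2 * Real.sqrt (-D) := by
          apply le_of_sq_le_sq' (by positivity) (by positivity)
          have hs1 : (2 * Real.sqrt (-D))^2 = 4 * (-D) := by
            rw [mul_pow, Real.sq_sqrt hDneg.le]; ring
          rw [hs1, mul_pow, h1m, hD]
          nlinarith [mul_le_mul_of_nonpos_right (show 8*s+s^2 ≤ 16*t by linarith)
            (show s^2 - 16 ≤ 0 by nlinarith),
            mul_nonneg (mul_nonneg hs0.le hs0.le) (show (0:ℝ) ≤ 2 - s by linarith)]
        intro n hn
        calc ‖Sseq x y n‖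
            ≤ (‖x‖ ^ n + ‖y‖ ^ n) / ‖x - y‖ := Sseq_abs_le' hxy n
          _ = 2 * ‖x‖ ^ n / Real.sqrt (-D) := by rw [habsxy, hay_eq]; ring_nf
          _ ≤ 2 * ‖x‖ / Real.sqrt (-D) := by
              gcongr
              calc ‖x‖ ^ n ≤ ‖x‖ ^ 1 :=
                    pow_le_pow_of_le_one (norm_nonneg x) hax1 hn
                _ = ‖x‖ := pow_one _
          _ ≤ 4 / s := by
              rw [div_le_div_iff₀ hsq0 hs0]
              linarith [hkey]

open Matrix in
private lemma star_eq_transpose_real {d : ℕ} (M : Matrix (Fin d) (Fin d) ℝ) : star M = Mᵀ := by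
  ext i j
  simp [Matrix.star_apply]

open Matrix in
private lemma quad_form_decomp {d : ℕ} (U : Matrix (Fin d) (Fin d) ℝ) (f : Fin d → ℝ)
    (v : Fin d → ℝ) :
    v ⬝ᵥ (U * Matrix.diagonal f * star U) *ᵥ v = ∑ i, f i * ((star U *ᵥ v) i)^2 := by
  rw [← Matrix.mulVec_mulVec, ← Matrix.mulVec_mulVec]
  rw [star_eq_transpose_real]
  rw [Matrix.dotProduct_mulVec, ← Matrix.mulVec_transpose]
  rw [dotProduct]
  apply Finset.sum_congr rfl
  intro i _
  rw [Matrix.mulVec_diagonal]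
  ring

/-- Third bound of Theorem 2 in terms of function values: for 0 ≤ α ≤ 1/L,
0 ≤ β ≤ 2/L - α and α + β > 0, f(θ_n) - f(θ*) ≤ 8‖H^{-1/2}(θ_0 - θ*)‖²/((α+β)²n²). -/
theorem stmt_13 (d : ℕ) (hd : 1 ≤ d)
    (H : Matrix (Fin d) (Fin d) ℝ) (hHsymm : H.IsSymm) (hHpd : H.PosDef)
    (L : ℝ) (hL0 : 0 < L)
    (hL : ∀ v : Fin d → ℝ, v ⬝ᵥ H.mulVec v ≤ L * (v ⬝ᵥ v))
    (q θstar : Fin d → ℝ) (hθstar : H.mulVec θstar = q)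
    (α β : ℝ) (hα0 : 0 ≤ α) (hα : α ≤ 1 / L) (hβ0 : 0 ≤ β) (hβ : β ≤ 2 / L - α)
    (hαβ : 0 < α + β)
    (θ : ℕ → Fin d → ℝ) (hθ1 : θ 1 = θ 0)
    (η : ℕ → Fin d → ℝ) (hη : ∀ n, η n = (n : ℝ) • (θ n - θstar))
    (hrec : ∀ n : ℕ, 1 ≤ n →
      η (n + 1) = (η n - α • H.mulVec (η n))
        + ((η n - η (n - 1)) - β • H.mulVec (η n - η (n - 1)))) :
    ∀ n : ℕ, 1 ≤ n →
      ((1 : ℝ) / 2 * (θ n ⬝ᵥ H.mulVec (θ n)) - q ⬝ᵥ θ n)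
          - ((1 : ℝ) / 2 * (θstar ⬝ᵥ H.mulVec θstar) - q ⬝ᵥ θstar)
        ≤ 8 * (((hHpd.posSemidef.sqrt)⁻¹.mulVec (θ 0 - θstar)) ⬝ᵥ
              ((hHpd.posSemidef.sqrt)⁻¹.mulVec (θ 0 - θstar)))
            / ((α + β) ^ 2 * (n : ℝ) ^ 2) := by
  intro n hn
  classical
  have hH : H.IsHermitian := hHpd.1
  set e : Fin d → ℝ := hH.eigenvalues with he
  set U : Matrix (Fin d) (Fin d) ℝ := (hH.eigenvectorUnitary : Matrix (Fin d) (Fin d) ℝ) with hU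
  have hspec : H = U * Matrix.diagonal e * star U := by
    have h := hH.spectral_theorem
    have h2 : (RCLike.ofReal ∘ e : Fin d → ℝ) = e := by
      funext i; simp [Function.comp]
    rw [h2] at h
    exact h
  have hmem := hH.eigenvectorUnitary.2
  rw [Unitary.mem_iff] at hmem
  obtain ⟨hUU, hUU'⟩ := hmem
  have heigpos : ∀ i, 0 < e i := fun i => hHpd.eigenvalues_pos i
  -- eigenvalues are at most L
  have heigle : ∀ i, e i ≤ L := by
    intro i
    have hv := hH.mulVec_eigenvectorBasis i
    set w : Fin d → ℝ := ⇑(hH.eigenvectorBasis i) with hwdef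
    have hnorm1 : ‖hH.eigenvectorBasis i‖ = 1 := hH.eigenvectorBasis.orthonormal.1 i
    have hsum : ∑ j, w j ^ 2 = 1 := by
      have h2 := EuclideanSpace.norm_eq (hH.eigenvectorBasis i)
      rw [hnorm1] at h2
      have h3 : Real.sqrt (∑ j, ‖w j‖^2) = 1 := h2.symm
      rw [Real.sqrt_eq_one] at h3
      simpa [Real.norm_eq_abs, sq_abs] using h3
    have hww : w ⬝ᵥ w = 1 := by
      rw [dotProduct]
      simpa [pow_two] using hsum
    have hLw := hL w
    rw [hv, dotProduct_smul, smul_eq_mul, hww] at hLw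
    simpa using hLw
  -- eigencoordinates
  set c : ℕ → Fin d → ℝ := fun k => star U *ᵥ η k with hc
  have hcoordH : ∀ (w : Fin d → ℝ) (i : Fin d),
      (star U *ᵥ (H *ᵥ w)) i = e i * ((star U *ᵥ w) i) := by
    intro w i
    rw [hspec, Matrix.mulVec_mulVec]
    have hkey : star U * (U * Matrix.diagonal e * star U) = Matrix.diagonal e * star U := by
      rw [show U * Matrix.diagonal e * star U = U * (Matrix.diagonal e * star U) from by
        rw [Matrix.mul_assoc], ← Matrix.mul_assoc, hUU, Matrix.one_mul]
    rw [hkey, ← Matrix.mulVec_mulVec, Matrix.mulVec_diagonal]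
  have hη0 : η 0 = 0 := by rw [hη 0]; simp
  have hcrec : ∀ i, ∀ k : ℕ, 1 ≤ k →
      c (k+1) i = (2 - (α*e i + β*e i)) * c k i - (1 - β*e i) * c (k-1) i := by
    intro i k hk
    have hr := congrArg (fun v => (star U *ᵥ v) i) (hrec k hk)
    simp only [Matrix.mulVec_add, Matrix.mulVec_sub, Matrix.mulVec_smul, Pi.add_apply,
      Pi.sub_apply, Pi.smul_apply, smul_eq_mul] at hr
    rw [hcoordH (η k) i, hcoordH (η (k-1)) i] at hr
    show (star U *ᵥ η (k+1)) i = _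
    rw [hr]
    show _ = (2 - (α*e i + β*e i)) * (star U *ᵥ η k) i - (1 - β*e i) * (star U *ᵥ η (k-1)) i
    ring
  -- scalar bound per eigen-coordinate
  have hαL : α * L ≤ 1 := by
    have := (le_div_iff₀ hL0).mp hα
    linarith [this]
  have hαβL : (α + β) * L ≤ 2 := by
    have h1 : α + β ≤ 2 / L := by linarith
    have := (le_div_iff₀ hL0).mp h1
    linarith [this]
  have hbound : ∀ i, ∀ k : ℕ, |c k i| ≤ 4 / ((α+β) * e i) * |c 1 i| := by
    intro i
    have hei := heigpos i
    have h := key_scalar (α * e i) (β * e i) (c 1 i)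
      (mul_nonneg hα0 hei.le)
      (by nlinarith [mul_le_mul_of_nonneg_left (heigle i) hα0])
      (mul_nonneg hβ0 hei.le)
      (by nlinarith)
      (by nlinarith [mul_le_mul_of_nonneg_left (heigle i) hαβ.le])
      (fun k => c k i)
      (by simp [hc, hη0])
      rfl
      (fun k hk => hcrec i k hk)
    intro k
    have hk := h k
    rwa [show α * e i + β * e i = (α+β) * e i from by ring] at hk
  -- quadratic forms in eigencoordinates
  have hqn : ∀ k : ℕ, η k ⬝ᵥ H *ᵥ η k = ∑ i, e i * (c k i)^2 := by
    intro k
    rw [hspec]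
    exact quad_form_decomp U e (η k)
  have hinv : H⁻¹ = U * Matrix.diagonal (fun i => (e i)⁻¹) * star U := by
    apply Matrix.inv_eq_right_inv
    rw [hspec]
    calc (U * Matrix.diagonal e * star U) * (U * Matrix.diagonal (fun i => (e i)⁻¹) * star U)
        = U * (Matrix.diagonal e * ((star U * U) * Matrix.diagonal (fun i => (e i)⁻¹))) * star U
          := by simp only [Matrix.mul_assoc]
      _ = 1 := by
          rw [hUU, Matrix.one_mul, Matrix.diagonal_mul_diagonal]
          have hone : (fun i => e i * (e i)⁻¹) = fun _ => (1:ℝ) := by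
            funext i
            simp [mul_inv_cancel₀ (heigpos i).ne']
          rw [hone, Matrix.diagonal_one, Matrix.mul_one, hUU']
  have hq1 : η 1 ⬝ᵥ H⁻¹ *ᵥ η 1 = ∑ i, (e i)⁻¹ * (c 1 i)^2 := by
    rw [hinv]
    exact quad_form_decomp U _ (η 1)
  -- main spectral estimate
  have hmain : η n ⬝ᵥ H *ᵥ η n ≤ 16 / (α+β)^2 * (η 1 ⬝ᵥ H⁻¹ *ᵥ η 1) := by
    rw [hqn n, hq1, Finset.mul_sum]
    apply Finset.sum_le_sum
    intro i _
    have hb := hbound i n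
    have hei := heigpos i
    have h1 : (c n i)^2 ≤ (4 / ((α+β) * e i) * |c 1 i|)^2 := by
      rw [← sq_abs (c n i)]
      exact pow_le_pow_left₀ (abs_nonneg _) hb 2
    calc e i * (c n i)^2 ≤ e i * (4 / ((α+β) * e i) * |c 1 i|)^2 :=
          mul_le_mul_of_nonneg_left h1 hei.le
      _ = 16 / (α+β)^2 * ((e i)⁻¹ * (c 1 i)^2) := by
          rw [mul_pow, div_pow, sq_abs]
          field_simp
          ring
  -- the square-root norm is the H⁻¹ quadratic form
  have hsqrt : ((hHpd.posSemidef.sqrt)⁻¹ *ᵥ (θ 0 - θstar)) ⬝ᵥ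
      ((hHpd.posSemidef.sqrt)⁻¹ *ᵥ (θ 0 - θstar)) = (θ 0 - θstar) ⬝ᵥ H⁻¹ *ᵥ (θ 0 - θstar) := by
    set S := hHpd.posSemidef.sqrt with hSdef
    set v := θ 0 - θstar with hvdef
    have hSeq : S = U * diagonal (fun i => √(e i)) * star U := rfl
    have hSt : Sᵀ = S := by
      rw [← star_eq_transpose_real, Matrix.star_eq_conjTranspose]
      rw [hSeq]; simp [Matrix.conjTranspose_mul, Matrix.mul_assoc, star_eq_transpose_real]
    have hSS : S * S = H := by
      rw [hSeq, hspec]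
      calc U * diagonal (fun i => √(e i)) * star U * (U * diagonal (fun i => √(e i)) * star U)
          = U * (diagonal (fun i => √(e i)) * ((star U * U) * diagonal (fun i => √(e i))))
            * star U := by simp only [Matrix.mul_assoc]
        _ = U * diagonal e * star U := by
            rw [hUU, Matrix.one_mul, diagonal_mul_diagonal]
            have hse : (fun i => √(e i) * √(e i)) = e :=
              funext fun i => Real.mul_self_sqrt (heigpos i).le
            rw [hse]
    calc (S⁻¹ *ᵥ v) ⬝ᵥ (S⁻¹ *ᵥ v)
        = ((S⁻¹ *ᵥ v) ᵥ* S⁻¹) ⬝ᵥ v := dotProduct_mulVec _ _ _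
      _ = ((S⁻¹ * S⁻¹) *ᵥ v) ⬝ᵥ v := by
          rw [← Matrix.mulVec_transpose, Matrix.transpose_nonsing_inv, hSt,
            Matrix.mulVec_mulVec]
      _ = (H⁻¹ *ᵥ v) ⬝ᵥ v := by rw [← Matrix.mul_inv_rev, hSS]
      _ = v ⬝ᵥ H⁻¹ *ᵥ v := dotProduct_comm _ _
  have hη1 : η 1 = θ 0 - θstar := by
    rw [hη 1, hθ1]; simp
  -- symmetry of the quadratic form
  have hsymdot : ∀ a b : Fin d → ℝ, a ⬝ᵥ H *ᵥ b = b ⬝ᵥ H *ᵥ a := by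
    intro a b
    rw [Matrix.dotProduct_mulVec, ← Matrix.mulVec_transpose, hHsymm, dotProduct_comm]
  have hquad_id : ∀ a : Fin d → ℝ,
      (1:ℝ)/2*(a ⬝ᵥ H *ᵥ a) - q ⬝ᵥ a - ((1:ℝ)/2*(θstar ⬝ᵥ H *ᵥ θstar) - q ⬝ᵥ θstar)
        = 1/2 * ((a - θstar) ⬝ᵥ H *ᵥ (a - θstar)) := by
    intro a
    have h1 : (a - θstar) ⬝ᵥ H *ᵥ (a - θstar)
        = a ⬝ᵥ H *ᵥ a - a ⬝ᵥ H *ᵥ θstar - θstar ⬝ᵥ H *ᵥ a + θstar ⬝ᵥ H *ᵥ θstar := by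
      simp only [Matrix.mulVec_sub, dotProduct_sub, sub_dotProduct]
      ring
    have h2 : θstar ⬝ᵥ H *ᵥ a = a ⬝ᵥ H *ᵥ θstar := hsymdot _ _
    have h3 : a ⬝ᵥ H *ᵥ θstar = a ⬝ᵥ q := by rw [hθstar]
    have h4 : θstar ⬝ᵥ H *ᵥ θstar = θstar ⬝ᵥ q := by rw [hθstar]
    have h5 : q ⬝ᵥ a = a ⬝ᵥ q := dotProduct_comm _ _
    have h6 : q ⬝ᵥ θstar = θstar ⬝ᵥ q := dotProduct_comm _ _
    rw [h1, h2, h3, h5, h6]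
    rw [h4]
    ring
  have hnpos : (0:ℝ) < (n:ℝ) := by exact_mod_cast Nat.lt_of_lt_of_le Nat.zero_lt_one hn
  have hne0 : (n:ℝ) ≠ 0 := ne_of_gt hnpos
  have hab : (α+β) ≠ 0 := ne_of_gt hαβ
  have hw : θ n - θstar = (n:ℝ)⁻¹ • η n := by
    rw [hη n, smul_smul, inv_mul_cancel₀ (ne_of_gt hnpos), one_smul]
  have hLHS : (1:ℝ)/2*(θ n ⬝ᵥ H *ᵥ θ n) - q ⬝ᵥ θ n
      - ((1:ℝ)/2*(θstar ⬝ᵥ H *ᵥ θstar) - q ⬝ᵥ θstar)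
      = 1/(2*(n:ℝ)^2) * (η n ⬝ᵥ H *ᵥ η n) := by
    rw [hquad_id (θ n), hw, smul_dotProduct, Matrix.mulVec_smul, dotProduct_smul]
    simp only [smul_eq_mul]
    field_simp
  have hq1nonneg : 0 ≤ η 1 ⬝ᵥ H⁻¹ *ᵥ η 1 := by
    rw [hq1]
    apply Finset.sum_nonneg
    intro i _
    exact mul_nonneg (inv_nonneg.mpr (heigpos i).le) (sq_nonneg _)
  calc ((1 : ℝ) / 2 * (θ n ⬝ᵥ H.mulVec (θ n)) - q ⬝ᵥ θ n)
          - ((1 : ℝ) / 2 * (θstar ⬝ᵥ H.mulVec θstar) - q ⬝ᵥ θstar)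
      = 1/(2*(n:ℝ)^2) * (η n ⬝ᵥ H *ᵥ η n) := hLHS
    _ ≤ 1/(2*(n:ℝ)^2) * (16/(α+β)^2 * (η 1 ⬝ᵥ H⁻¹ *ᵥ η 1)) := by
        apply mul_le_mul_of_nonneg_left hmain
        positivity
    _ = 8 * (η 1 ⬝ᵥ H⁻¹ *ᵥ η 1) / ((α+β)^2 * (n:ℝ)^2) := by
        field_simp
        ring
    _ = 8 * (((hHpd.posSemidef.sqrt)⁻¹.mulVec (θ 0 - θstar)) ⬝ᵥ
              ((hHpd.posSemidef.sqrt)⁻¹.mulVec (θ 0 - θstar)))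
            / ((α + β) ^ 2 * (n : ℝ) ^ 2) := by
        rw [hη1]
        rw [← hsqrt]
end
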